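/- arXiv:1803.09229 — 6 statements merged into one kernel-verified Lean document; each statement's English description precedes it below -/
import Mathlib

section
/- Let a, b be integers with |a| ≥ 2 and |b| ≥ 2, and let A = [[1, a], [0, 1]] and B = [[1, 0], [b, 1]] in SL₂(ℤ). Then A and B generate a free subgroup of rank 2 of SL₂(ℤ); that is, the group homomorphism from the free group on two generators to SL₂(ℤ) sending the two generators to A and B respectively is injective. -/
/-- `A = [[1, a], [0, 1]]` as an element of `SL₂(ℤ)`. -/
def A2 (a : ℤ) : Matrix.SpecialLinearGroup (Fin 2) ℤ :=
  ⟨!![1, a; 0, 1], by simp [Matrix.det_fin_two_of]⟩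

/-- `B = [[1, 0], [b, 1]]` as an element of `SL₂(ℤ)`. -/
def B2 (b : ℤ) : Matrix.SpecialLinearGroup (Fin 2) ℤ :=
  ⟨!![1, 0; b, 1], by simp [Matrix.det_fin_two_of]⟩

namespace SL2Free

abbrev Letter := Fin 2 × Bool

def sgn (p : Letter) : ℤ := if p.2 then 1 else -1

def step (a b : ℤ) (p : Letter) (v : ℤ × ℤ) : ℤ × ℤ :=
  if p.1 = 0 then (v.1 + sgn p * a * v.2, v.2) else (v.1, v.2 + sgn p * b * v.1)

def act (a b : ℤ) : List Letter → ℤ × ℤ → ℤ × ℤ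
  | [], v => v
  | p :: t, v => step a b p (act a b t v)

def start (p : Letter) : ℤ × ℤ := if p.1 = 0 then (0, 1) else (1, 0)

def Inv (a b : ℤ) (p : Letter) (v : ℤ × ℤ) : Prop :=
  if p.1 = 0 then v.2 ≠ 0 ∧ v.2 ^ 2 < v.1 ^ 2 ∧ 0 < sgn p * a * v.2 * v.1
  else v.1 ≠ 0 ∧ v.1 ^ 2 < v.2 ^ 2 ∧ 0 < sgn p * b * v.1 * v.2

def R (p q : Letter) : Prop := p.1 = q.1 → p.2 = q.2

lemma ping {c x y : ℤ} (hc : 4 ≤ c ^ 2) (hx : x ≠ 0) (h1 : x ^ 2 < y ^ 2) :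
    y ≠ 0 ∧ y ^ 2 < (x + c * y) ^ 2 ∧ 0 < c * y * (x + c * y) := by
  have hx1 : 1 ≤ x ^ 2 := by nlinarith [sq_abs x, Int.one_le_abs hx]
  have hy : y ≠ 0 := by rintro rfl; nlinarith
  refine ⟨hy, ?_, ?_⟩ <;>
    nlinarith [sq_nonneg (c * y + 2 * x),
      mul_nonneg (by linarith : (0:ℤ) ≤ c ^ 2 - 4) (sq_nonneg y)]

lemma pong {c x y : ℤ} (hy : y ≠ 0) (h1 : y ^ 2 < x ^ 2) (h2 : 0 < c * y * x) :
    y ≠ 0 ∧ y ^ 2 < (x + c * y) ^ 2 ∧ 0 < c * y * (x + c * y) := by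
  refine ⟨hy, ?_, ?_⟩ <;> nlinarith [sq_nonneg (c * y)]

lemma transition {a b : ℤ} (ha : 4 ≤ a ^ 2) (hb : 4 ≤ b ^ 2) (p q : Letter)
    (hr : R p q) (v : ℤ × ℤ) (h : Inv a b q v) : Inv a b p (step a b p v) := by
  obtain ⟨x, y⟩ := v
  have hone : ∀ i : Fin 2, i ≠ 0 → i = 1 := by decide
  have hsa : (sgn p * a) ^ 2 = a ^ 2 := by unfold sgn; split <;> ring
  have hsb : (sgn p * b) ^ 2 = b ^ 2 := by unfold sgn; split <;> ring
  by_cases hp : p.1 = 0 <;> by_cases hq : q.1 = 0 <;>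
    simp only [Inv, step, hp, hq, if_true, if_neg, if_pos, Prod.fst, Prod.snd] at h ⊢
  · have e : p.2 = q.2 := hr (hp.trans hq.symm)
    have es : sgn q = sgn p := by simp [sgn, e]
    rw [es] at h
    exact pong h.1 h.2.1 h.2.2
  · exact ping (by rw [hsa]; exact ha) h.1 h.2.1
  · exact ping (by rw [hsb]; exact hb) h.1 h.2.1
  · have e : p.2 = q.2 := hr ((hone _ hp).trans (hone _ hq).symm)
    have es : sgn q = sgn p := by simp [sgn, e]
    rw [es] at h
    exact pong h.1 h.2.1 h.2.2


lemma base {a b : ℤ} (ha : 4 ≤ a ^ 2) (hb : 4 ≤ b ^ 2) (p : Letter) :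
    Inv a b p (step a b p (start p)) := by
  have hsa : (sgn p * a) ^ 2 = a ^ 2 := by unfold sgn; split <;> ring
  have hsb : (sgn p * b) ^ 2 = b ^ 2 := by unfold sgn; split <;> ring
  by_cases hp : p.1 = 0 <;>
    simp only [Inv, step, start, hp, if_true, if_false, ite_true, ite_false, Prod.fst, Prod.snd] <;>
    refine ⟨one_ne_zero, ?_, ?_⟩ <;> nlinarith [hsa, hsb]

lemma key {a b : ℤ} (ha : 4 ≤ a ^ 2) (hb : 4 ≤ b ^ 2) (L : List Letter) :
    ∀ p : Letter, List.Chain' R (p :: L) →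
      Inv a b p (act a b (p :: L) (start ((p :: L).getLast (by simp)))) := by
  induction L with
  | nil =>
    intro p _
    simpa [act, List.getLast_singleton] using base ha hb p
  | cons q t ih =>
    intro p hc
    obtain ⟨h1, h2⟩ := List.isChain_cons_cons.1 hc
    have hih := ih q h2
    have hlast : (p :: q :: t).getLast (by simp) = (q :: t).getLast (by simp) :=
      List.getLast_cons _
    show Inv a b p (step a b p (act a b (q :: t) (start ((p :: q :: t).getLast (by simp)))))
    rw [hlast]
    exact transition ha hb p q h1 _ hih

lemma chain_of_reduced (L : List Letter)
    (h : ∀ (L1 : List Letter) (x : Fin 2) (c : Bool) (L2 : List Letter),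
      L ≠ L1 ++ (x, c) :: (x, !c) :: L2) :
    List.Chain' R L := by
  induction L with
  | nil => exact List.isChain_nil
  | cons p t ih =>
    cases t with
    | nil => exact List.isChain_singleton p
    | cons q u =>
      refine List.isChain_cons_cons.2 ⟨?_, ih ?_⟩
      · intro hij
        by_contra hst
        have hq : q = (p.1, !p.2) := by
          obtain ⟨qi, qs⟩ := q
          obtain ⟨pi, ps⟩ := p
          simp only [Prod.mk.injEq] at *
          cases ps <;> cases qs <;> simp_all
        exact h [] p.1 p.2 u (by rw [hq]; rfl)
      · intro L1 x c L2 hEq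
        exact h (p :: L1) x c L2 (by rw [hEq]; rfl)

def mat (a b : ℤ) (p : Letter) : Matrix.SpecialLinearGroup (Fin 2) ℤ :=
  cond p.2 ((![A2 a, B2 b]) p.1) ((![A2 a, B2 b]) p.1)⁻¹

def lmat (a b : ℤ) (p : Letter) : Matrix (Fin 2) (Fin 2) ℤ :=
  if p.1 = 0 then !![1, sgn p * a; 0, 1] else !![1, 0; sgn p * b, 1]

lemma coe_mat (a b : ℤ) (p : Letter) :
    ((mat a b p : Matrix.SpecialLinearGroup (Fin 2) ℤ) : Matrix (Fin 2) (Fin 2) ℤ)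
      = lmat a b p := by
  have cA : ∀ c, ((A2 c : Matrix.SpecialLinearGroup (Fin 2) ℤ) : Matrix (Fin 2) (Fin 2) ℤ) = !![1, c; 0, 1] := fun _ => rfl
  have cB : ∀ c, ((B2 c : Matrix.SpecialLinearGroup (Fin 2) ℤ) : Matrix (Fin 2) (Fin 2) ℤ) = !![1, 0; c, 1] := fun _ => rfl
  have hAinv : (A2 a)⁻¹ = A2 (-a) := by
    refine inv_eq_of_mul_eq_one_right (Subtype.ext ?_)
    rw [Matrix.SpecialLinearGroup.coe_mul, cA, cA]
    simp [Matrix.mul_fin_two, Matrix.one_fin_two]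
  have hBinv : (B2 b)⁻¹ = B2 (-b) := by
    refine inv_eq_of_mul_eq_one_right (Subtype.ext ?_)
    rw [Matrix.SpecialLinearGroup.coe_mul, cB, cB]
    simp [Matrix.mul_fin_two, Matrix.one_fin_two]
  obtain ⟨i, s⟩ := p
  fin_cases i <;> cases s <;>
    simp [mat, lmat, sgn, cA, cB, hAinv, hBinv]

lemma lmat_mulVec (a b : ℤ) (p : Letter) (v : ℤ × ℤ) :
    (lmat a b p).mulVec ![v.1, v.2] = ![(step a b p v).1, (step a b p v).2] := by
  by_cases hp : p.1 = 0 <;>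
    simp only [lmat, step, hp, if_true, if_neg, if_pos] <;>
    funext i <;> fin_cases i <;>
    simp [Matrix.mulVec, dotProduct, Fin.sum_univ_two] <;> ring

lemma bridge (a b : ℤ) (L : List Letter) (v : ℤ × ℤ) :
    (((L.map (mat a b)).prod : Matrix.SpecialLinearGroup (Fin 2) ℤ) :
        Matrix (Fin 2) (Fin 2) ℤ).mulVec ![v.1, v.2]
      = ![(act a b L v).1, (act a b L v).2] := by
  induction L with
  | nil => simp [act, Matrix.SpecialLinearGroup.coe_one, Matrix.one_mulVec]
  | cons p t ih =>
    show _ = ![(step a b p (act a b t v)).1, (step a b p (act a b t v)).2]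
    rw [List.map_cons, List.prod_cons, Matrix.SpecialLinearGroup.coe_mul,
      ← Matrix.mulVec_mulVec, ih, coe_mat, lmat_mulVec]

end SL2Free

/-- for integers `a, b` with `|a| ≥ 2` and `|b| ≥ 2`, the matrices
`A = [[1, a], [0, 1]]` and `B = [[1, 0], [b, 1]]` generate a free subgroup of rank 2 of
`SL₂(ℤ)`: the homomorphism from the free group on two generators sending them to `A` and `B`
is injective. -/
theorem sl2_free (a b : ℤ) (ha : 2 ≤ |a|) (hb : 2 ≤ |b|) :
    Function.Injective ⇑(FreeGroup.lift ![A2 a, B2 b]) := by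
  have ha4 : 4 ≤ a ^ 2 := by nlinarith [sq_abs a]
  have hb4 : 4 ≤ b ^ 2 := by nlinarith [sq_abs b]
  rw [injective_iff_map_eq_one]
  intro w hw
  by_contra hne
  have hLne : w.toWord ≠ [] := fun h => hne (FreeGroup.toWord_eq_nil_iff.1 h)
  have hred : FreeGroup.reduce w.toWord = w.toWord := FreeGroup.reduce_toWord w
  have hchain : List.Chain' SL2Free.R w.toWord :=
    SL2Free.chain_of_reduced _ (fun L1 x c L2 hEq => FreeGroup.reduce.not (hred.trans hEq))
  obtain ⟨p, t, hLt⟩ : ∃ p t, w.toWord = p :: t := by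
    cases h : w.toWord with
    | nil => exact absurd h hLne
    | cons p t => exact ⟨p, t, rfl⟩
  rw [hLt] at hchain
  have hkey := SL2Free.key ha4 hb4 t p hchain
  set s : ℤ × ℤ := SL2Free.start ((p :: t).getLast (by simp)) with hs
  set v : ℤ × ℤ := SL2Free.act a b (p :: t) s with hv
  have hw' : (((p :: t).map (SL2Free.mat a b)).prod : Matrix.SpecialLinearGroup (Fin 2) ℤ) = 1 := by
    have := hw
    rw [← FreeGroup.mk_toWord (x := w), FreeGroup.lift_mk, hLt] at this
    exact this
  have hb2 := SL2Free.bridge a b (p :: t) s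
  rw [hw', Matrix.SpecialLinearGroup.coe_one, Matrix.one_mulVec] at hb2
  have h1 : s.1 = v.1 := congr_fun hb2 0
  have h2 : s.2 = v.2 := congr_fun hb2 1
  have hvne : v.1 ≠ 0 ∧ v.2 ≠ 0 := by
    unfold SL2Free.Inv at hkey
    split at hkey
    · exact ⟨fun h0 => by rw [h0] at hkey; nlinarith [hkey.2.1, sq_nonneg v.2], hkey.1⟩
    · exact ⟨hkey.1, fun h0 => by rw [h0] at hkey; nlinarith [hkey.2.1, sq_nonneg v.1]⟩
  unfold SL2Free.start at hs
  split at hs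
  · exact hvne.1 (by rw [← h1, hs])
  · exact hvne.2 (by rw [← h2, hs])
end

section
/- Let a, b be integers with |a| ≥ 2 and |b| ≥ 2, and let A = [[1, a], [0, 1]] and B = [[1, 0], [b, 1]] in SL₂(ℤ). There exists a constant C > 0 such that for every prime p and every non-identity element w of the free group on two generators whose reduced word length is at most C · log p, the image of w under the homomorphism to SL₂(ZMod p) sending the two generators to the mod-p reductions A_p and B_p is not the identity. (Equivalently, the girth of the Cayley graph of ⟨A_p, B_p⟩ with respect to {A_p, B_p} is at least C · log p.) -/
/-- Entrywise reduction modulo `p`, as a group homomorphism `SL₂(ℤ) →* SL₂(ZMod p)`. -/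
def modp2 (p : ℕ) :
    Matrix.SpecialLinearGroup (Fin 2) ℤ →* Matrix.SpecialLinearGroup (Fin 2) (ZMod p) :=
  Matrix.SpecialLinearGroup.map (Int.castRingHom (ZMod p))


def PP0 (a x y : ℤ) : Prop := 0 < a*x*y ∧ y^2 ≤ x^2
def PP1 (a b x y : ℤ) : Prop := 0 < b*x*y ∧ (x^2 < y^2 ∨ (x^2 = y^2 ∧ a*x*y ≤ 0))

variable {a b x y : ℤ}

lemma one_le_sq (hy : y ≠ 0) : 1 ≤ y^2 := by
  have h : 0 < y^2 := by positivity
  omega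

lemma H1 (ha : 4 ≤ a^2) (hxy : x^2 ≤ y^2) (hy : y ≠ 0) : 0 < a*(x+a*y)*y := by
  have h1 := one_le_sq hy
  nlinarith [sq_nonneg (a*y+2*x), mul_nonneg (sub_nonneg.2 ha) (sq_nonneg y)]

lemma grow (ha : 4 ≤ a^2) (hxy : x^2 ≤ y^2) : y^2 ≤ (x+a*y)^2 := by
  nlinarith [sq_nonneg (a*x+2*y), sq_nonneg (2*x+a*y),
    mul_nonneg (sub_nonneg.2 hxy) (sub_nonneg.2 ha),
    mul_nonneg (sub_nonneg.2 ha) (sq_nonneg y)]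

lemma grow' (ha : 4 ≤ a^2) (hxy : x^2 < y^2) : y^2 < (x+a*y)^2 := by
  nlinarith [sq_nonneg (a*x+2*y), sq_nonneg (2*x+a*y),
    mul_nonneg (sub_nonneg.2 hxy.le) (sub_nonneg.2 ha),
    mul_nonneg (sub_nonneg.2 ha) (sq_nonneg y)]

lemma L1 (ha : 4 ≤ a^2) (h : PP0 a x y) : PP0 a (x + a*y) y := by
  obtain ⟨h1, h2⟩ := h
  exact ⟨by nlinarith [sq_nonneg (a*y)], by nlinarith [sq_nonneg (a*y)]⟩

lemma L2 (ha : 4 ≤ a^2) (h : PP1 a b x y) : PP0 a (x + a*y) y := by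
  obtain ⟨h1, h2⟩ := h
  have hy : y ≠ 0 := by rintro rfl; simp at h1
  have hxy : x^2 ≤ y^2 := by rcases h2 with h2 | ⟨h2, _⟩ <;> linarith
  exact ⟨H1 ha hxy hy, grow ha hxy⟩

lemma L3 (ha : 4 ≤ a^2) (hb : 4 ≤ b^2) (h : PP0 a x y) : PP1 a b x (b*x+y) := by
  obtain ⟨h1, h2⟩ := h
  have hx : x ≠ 0 := by rintro rfl; simp at h1
  constructor
  · have hh := H1 (a := b) (x := y) (y := x) hb h2 hx
    nlinarith [hh]
  · have hge : x^2 ≤ (y+b*x)^2 := grow (a := b) (x := y) (y := x) hb h2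
    have hge' : x^2 ≤ (b*x+y)^2 := by nlinarith [hge]
    rcases lt_or_eq_of_le hge' with hlt | heq
    · exact Or.inl hlt
    · refine Or.inr ⟨heq.symm ▸ rfl, ?_⟩
      · have h0 : (b*x+2*y)^2 ≤ 0 := by nlinarith [heq]
        have h1' : b*x+2*y = 0 := by nlinarith [sq_nonneg (b*x+2*y)]
        have hy' : b*x + y = -y := by linarith
        rw [hy']
        nlinarith
lemma L4 (hb : 4 ≤ b^2) (h : PP1 a b x y) : PP1 a b x (b*x+y) := by
  obtain ⟨h1, h2⟩ := h
  have hx : x ≠ 0 := by rintro rfl; simp at h1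
  have hx2 := one_le_sq hx
  have hxy : x^2 ≤ y^2 := by rcases h2 with h2 | ⟨h2, _⟩ <;> linarith
  constructor
  · nlinarith [sq_nonneg (b*x)]
  · exact Or.inl (by nlinarith [mul_nonneg (sub_nonneg.2 hb) (sq_nonneg x)])

lemma L5 (ha : 4 ≤ a^2) (hb : 4 ≤ b^2) (hv : x ≠ 0 ∨ y ≠ 0) :
    PP0 a (x+a*y) y ∨ PP1 a b x (b*x+y) := by
  by_cases hy : y = 0
  · subst hy
    have hx : x ≠ 0 := hv.resolve_right (by simp)
    have hx2 := one_le_sq hx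
    refine Or.inr ⟨by nlinarith, Or.inl (by nlinarith)⟩
  · rcases lt_or_ge 0 (a*x*y) with h1 | h1
    · have hy2 := one_le_sq hy
      exact Or.inl ⟨by nlinarith [sq_nonneg (a*y)], by nlinarith [mul_nonneg (sub_nonneg.2 ha) (sq_nonneg y)]⟩
    · rcases le_or_gt (x^2) (y^2) with h2 | h2
      · exact Or.inl ⟨H1 ha h2 hy, grow ha h2⟩
      · have hx : x ≠ 0 := by rintro rfl; simp at h2; nlinarith [sq_nonneg y]
        refine Or.inr ⟨?_, Or.inl ?_⟩
        · have hh := H1 (a := b) (x := y) (y := x) hb h2.le hx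
          nlinarith [hh]
        · have := grow' (a := b) (x := y) (y := x) hb h2
          nlinarith [this]

open Matrix

abbrev SL2Z := Matrix.SpecialLinearGroup (Fin 2) ℤ


/-- nonzero integer vectors -/
def V2 := {v : Fin 2 → ℤ // v ≠ 0}

instance : MulAction SL2Z V2 where
  smul g v := ⟨(g : Matrix (Fin 2) (Fin 2) ℤ).mulVec v.1, by
    intro h
    apply v.2
    have h2 : ((g⁻¹ : SL2Z) : Matrix (Fin 2) (Fin 2) ℤ).mulVec
        (((g : SL2Z) : Matrix (Fin 2) (Fin 2) ℤ).mulVec v.1) = v.1 := by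
      rw [Matrix.mulVec_mulVec, ← Matrix.SpecialLinearGroup.coe_mul, inv_mul_cancel,
        Matrix.SpecialLinearGroup.coe_one, Matrix.one_mulVec]
    rw [h, Matrix.mulVec_zero] at h2
    exact h2.symm⟩
  one_smul v := Subtype.ext (by
    show ((1 : SL2Z) : Matrix (Fin 2) (Fin 2) ℤ).mulVec v.1 = v.1
    rw [Matrix.SpecialLinearGroup.coe_one, Matrix.one_mulVec])
  mul_smul g h v := Subtype.ext (by
    show ((g * h : SL2Z) : Matrix (Fin 2) (Fin 2) ℤ).mulVec v.1 = _
    rw [Matrix.SpecialLinearGroup.coe_mul, ← Matrix.mulVec_mulVec]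
    rfl)

lemma V2.smul_coe (g : SL2Z) (v : V2) :
    (g • v).1 = (g : Matrix (Fin 2) (Fin 2) ℤ).mulVec v.1 := rfl

lemma A2_smul (a : ℤ) (v : V2) :
    ((A2 a) • v).1 = ![v.1 0 + a * v.1 1, v.1 1] := by
  rw [V2.smul_coe]
  funext i
  fin_cases i <;>
    simp [A2, Matrix.mulVec, dotProduct, Fin.sum_univ_two]

lemma B2_smul (b : ℤ) (v : V2) :
    ((B2 b) • v).1 = ![v.1 0, b * v.1 0 + v.1 1] := by
  rw [V2.smul_coe]
  funext i
  fin_cases i <;>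
    simp [B2, Matrix.mulVec, dotProduct, Fin.sum_univ_two]


def SX0 (a : ℤ) : Set V2 := {v | PP0 a (v.1 0) (v.1 1)}
def SX1 (a b : ℤ) : Set V2 := {v | PP1 a b (v.1 0) (v.1 1)}
def SY0 (a : ℤ) : Set V2 := {v | (A2 a) • v ∉ SX0 a}
def SY1 (a b : ℤ) : Set V2 := {v | (B2 b) • v ∉ SX1 a b}

lemma mem_SX0_A (a : ℤ) (v : V2) :
    (A2 a) • v ∈ SX0 a ↔ PP0 a (v.1 0 + a * v.1 1) (v.1 1) := by
  show PP0 a (((A2 a) • v).1 0) (((A2 a) • v).1 1) ↔ _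
  rw [A2_smul]
  simp

lemma mem_SX1_B (a b : ℤ) (v : V2) :
    (B2 b) • v ∈ SX1 a b ↔ PP1 a b (v.1 0) (b * v.1 0 + v.1 1) := by
  show PP1 a b (((B2 b) • v).1 0) (((B2 b) • v).1 1) ↔ _
  rw [B2_smul]
  simp

theorem free_AB (a b : ℤ) (ha : 4 ≤ a^2) (hb : 4 ≤ b^2) :
    Function.Injective (FreeGroup.lift ![A2 a, B2 b]) := by
  apply FreeGroup.injective_lift_of_ping_pong ![A2 a, B2 b]
    ![SX0 a, SX1 a b] ![SY0 a, SY1 a b]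
  · -- nonempty
    intro i
    fin_cases i
    · refine ⟨⟨![a, 1], fun h => one_ne_zero (congrFun h 1)⟩, ?_, ?_⟩ <;>
        simp only [Matrix.cons_val_zero, Matrix.cons_val_one, Matrix.head_cons] <;> nlinarith
    · refine ⟨⟨![1, b], fun h => one_ne_zero (congrFun h 0)⟩, ?_, Or.inl ?_⟩ <;>
        simp only [Matrix.cons_val_zero, Matrix.cons_val_one, Matrix.head_cons] <;> nlinarith
  · -- X pairwise disjoint
    intro i j hij
    have key : Disjoint (SX0 a) (SX1 a b) := by
      rw [Set.disjoint_left]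
      rintro v ⟨h1, h2⟩ ⟨h3, h4⟩
      rcases h4 with h4 | ⟨h4, h5⟩ <;> nlinarith
    fin_cases i <;> fin_cases j <;> simp_all <;> [exact key; exact key.symm]
  · -- Y pairwise disjoint
    intro i j hij
    have key : Disjoint (SY0 a) (SY1 a b) := by
      rw [Set.disjoint_left]
      rintro v h1 h2
      have h5 := L5 (a := a) (b := b) (x := v.1 0) (y := v.1 1) ha hb (by
        by_contra h
        push_neg at h
        exact v.2 (funext fun i => by fin_cases i <;> simp [h.1, h.2]))
      rcases h5 with h5 | h5
      · exact h1 ((mem_SX0_A a v).2 h5)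
      · exact h2 ((mem_SX1_B a b v).2 h5)
    fin_cases i <;> fin_cases j <;> simp_all <;> [exact key; exact key.symm]
  · -- X i disjoint Y j
    intro i j
    fin_cases i <;> fin_cases j <;> rw [Set.disjoint_left] <;> intro v hv hv' <;>
      simp only [Matrix.cons_val_zero, Matrix.cons_val_one, Matrix.head_cons] at hv hv'
    · exact hv' ((mem_SX0_A a v).2 (L1 ha hv))
    · exact hv' ((mem_SX1_B a b v).2 (L3 ha hb hv))
    · exact hv' ((mem_SX0_A a v).2 (L2 ha hv))
    · exact hv' ((mem_SX1_B a b v).2 (L4 hb hv))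
  · -- hX
    intro i
    fin_cases i <;> rintro w ⟨u, hu, rfl⟩
    · simpa using not_not.1 hu
    · simpa using not_not.1 hu
  · -- hY
    intro i
    fin_cases i <;> rintro w ⟨u, hu, rfl⟩
    · show A2 a • (A2 a)⁻¹ • u ∉ SX0 a
      rw [smul_inv_smul]; exact hu
    · show B2 b • (B2 b)⁻¹ • u ∉ SX1 a b
      rw [smul_inv_smul]; exact hu



lemma A2_inv (a : ℤ) : (A2 a)⁻¹ = A2 (-a) := by
  symm
  rw [eq_inv_iff_mul_eq_one]
  ext i j
  rw [Matrix.SpecialLinearGroup.coe_mul]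
  fin_cases i <;> fin_cases j <;>
    simp [A2, Matrix.SpecialLinearGroup.coe_mul, Matrix.mul_fin_two]

lemma B2_inv (b : ℤ) : (B2 b)⁻¹ = B2 (-b) := by
  symm
  rw [eq_inv_iff_mul_eq_one]
  ext i j
  rw [Matrix.SpecialLinearGroup.coe_mul]
  fin_cases i <;> fin_cases j <;>
    simp [B2, Matrix.SpecialLinearGroup.coe_mul, Matrix.mul_fin_two]

lemma A2_entry (a M : ℤ) (hM : 1 ≤ M) (haM : |a| ≤ M) (i j : Fin 2) :
    |((A2 a : SL2Z) : Matrix (Fin 2) (Fin 2) ℤ) i j| ≤ M := by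
  fin_cases i <;> fin_cases j <;> simp [A2] <;> omega

lemma B2_entry (b M : ℤ) (hM : 1 ≤ M) (hbM : |b| ≤ M) (i j : Fin 2) :
    |((B2 b : SL2Z) : Matrix (Fin 2) (Fin 2) ℤ) i j| ≤ M := by
  fin_cases i <;> fin_cases j <;> simp [B2] <;> omega

lemma prod_bound (M : ℤ) (hM : 1 ≤ M) :
    ∀ L : List SL2Z, (∀ g ∈ L, ∀ i j, |((g : SL2Z) : Matrix (Fin 2) (Fin 2) ℤ) i j| ≤ M) →
    ∀ i j, |((L.prod : SL2Z) : Matrix (Fin 2) (Fin 2) ℤ) i j| ≤ (2*M)^L.length := by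
  intro L
  induction L with
  | nil =>
    intro _ i j
    simp only [List.prod_nil, List.length_nil, pow_zero, Matrix.SpecialLinearGroup.coe_one]
    rw [Matrix.one_apply]
    split_ifs <;> simp
  | cons g L ih =>
    intro h i j
    have hg := h g (List.mem_cons_self)
    have hL := ih (fun g' hg' => h g' (List.mem_cons_of_mem _ hg'))
    have hpow : (0:ℤ) ≤ (2*M)^L.length := by positivity
    rw [List.prod_cons, Matrix.SpecialLinearGroup.coe_mul]
    rw [List.length_cons, pow_succ]
    rw [Matrix.mul_apply, Fin.sum_univ_two]
    calc |((g:SL2Z):Matrix (Fin 2) (Fin 2) ℤ) i 0 * ((L.prod:SL2Z):Matrix (Fin 2) (Fin 2) ℤ) 0 j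
          + ((g:SL2Z):Matrix (Fin 2) (Fin 2) ℤ) i 1 * ((L.prod:SL2Z):Matrix (Fin 2) (Fin 2) ℤ) 1 j|
        ≤ |((g:SL2Z):Matrix (Fin 2) (Fin 2) ℤ) i 0 * ((L.prod:SL2Z):Matrix (Fin 2) (Fin 2) ℤ) 0 j|
          + |((g:SL2Z):Matrix (Fin 2) (Fin 2) ℤ) i 1 * ((L.prod:SL2Z):Matrix (Fin 2) (Fin 2) ℤ) 1 j| :=
          abs_add_le _ _
      _ ≤ M * (2*M)^L.length + M * (2*M)^L.length := by
          rw [abs_mul, abs_mul]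
          have := hg i 0; have := hg i 1; have := hL 0 j; have := hL 1 j
          gcongr
      _ = (2*M)^L.length * (2*M) := by ring

lemma lift_entry_bound (a b : ℤ) (ha : 2 ≤ |a|) (hb : 2 ≤ |b|) (w : FreeGroup (Fin 2))
    (i j : Fin 2) :
    |((FreeGroup.lift ![A2 a, B2 b] w : SL2Z) : Matrix (Fin 2) (Fin 2) ℤ) i j|
      ≤ (2*(|a|+|b|))^(FreeGroup.toWord w).length := by
  set M : ℤ := |a| + |b| with hM
  have hM1 : 1 ≤ M := by have := abs_nonneg b; linarith
  have haM : |a| ≤ M := by have := abs_nonneg b; linarith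
  have hbM : |b| ≤ M := by have := abs_nonneg a; linarith
  conv_lhs => rw [← FreeGroup.mk_toWord (x := w), FreeGroup.lift_mk]
  have hlen : ((FreeGroup.toWord w).map
      (fun x => cond x.2 (![A2 a, B2 b] x.1) (![A2 a, B2 b] x.1)⁻¹)).length
      = (FreeGroup.toWord w).length := List.length_map _
  rw [← hlen]
  apply prod_bound M hM1
  intro g hg
  obtain ⟨x, _, rfl⟩ := List.mem_map.mp hg
  obtain ⟨i', b'⟩ := x
  fin_cases i' <;> cases b' <;>
    simp only [Fin.zero_eta, Fin.mk_one, cond_false, cond_true, Matrix.cons_val_zero, Matrix.cons_val_one,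
      Matrix.head_cons, A2_inv, B2_inv]
  · exact fun i j => A2_entry (-a) M hM1 (by rwa [abs_neg]) i j
  · exact fun i j => A2_entry a M hM1 haM i j
  · exact fun i j => B2_entry (-b) M hM1 (by rwa [abs_neg]) i j
  · exact fun i j => B2_entry b M hM1 hbM i j

/-- there is a constant `C > 0` such that for every prime `p`, every nontrivial
element of the free group on two generators of reduced word length at most `C · log p` has
nontrivial image under the homomorphism sending the generators to the mod-`p` reductions of
`A = [[1, a], [0, 1]]` and `B = [[1, 0], [b, 1]]`; i.e. the girth of the Cayley graph of
`⟨A_p, B_p⟩` with respect to `{A_p, B_p}` is at least `C · log p`. -/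
theorem sl2_girth (a b : ℤ) (ha : 2 ≤ |a|) (hb : 2 ≤ |b|) :
    ∃ C : ℝ, 0 < C ∧ ∀ p : ℕ, p.Prime →
      ∀ w : FreeGroup (Fin 2), w ≠ 1 →
        ((FreeGroup.toWord w).length : ℝ) ≤ C * Real.log p →
        FreeGroup.lift ![modp2 p (A2 a), modp2 p (B2 b)] w ≠ 1 := by
  have ha2 : 4 ≤ a^2 := by nlinarith [sq_abs a, abs_nonneg a]
  have hb2 : 4 ≤ b^2 := by nlinarith [sq_abs b, abs_nonneg b]
  set M : ℤ := |a| + |b| with hMdef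
  have hM1 : (4:ℤ) ≤ M := by omega
  set R : ℝ := ((4*M : ℤ) : ℝ) with hRdef
  have hR : (16:ℝ) ≤ R := by rw [hRdef]; exact_mod_cast by omega
  have hlogR : 0 < Real.log R := Real.log_pos (by linarith)
  refine ⟨1/(2*Real.log R), by positivity, ?_⟩
  intro p hp w hw hlen himg
  -- naturality
  have hnat : FreeGroup.lift ![modp2 p (A2 a), modp2 p (B2 b)] w
      = modp2 p (FreeGroup.lift ![A2 a, B2 b] w) := by
    have : FreeGroup.lift ![modp2 p (A2 a), modp2 p (B2 b)]
        = (modp2 p).comp (FreeGroup.lift ![A2 a, B2 b]) := by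
      ext i
      fin_cases i <;> simp
    rw [this]; rfl
  set g : SL2Z := FreeGroup.lift ![A2 a, B2 b] w with hg
  have hg1 : g ≠ 1 := by
    intro h
    exact hw (free_AB a b ha2 hb2 (by rw [← hg, h, _root_.map_one]))
  -- find a differing entry
  have hentry : ∃ i j, ((g : SL2Z) : Matrix (Fin 2) (Fin 2) ℤ) i j
      ≠ (1 : Matrix (Fin 2) (Fin 2) ℤ) i j := by
    by_contra h
    push_neg at h
    exact hg1 (Subtype.ext (Matrix.ext fun i j => h i j))
  obtain ⟨i, j, hij⟩ := hentry
  set n : ℕ := (FreeGroup.toWord w).length with hn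
  have hn1 : 1 ≤ n := by
    rw [hn, Nat.one_le_iff_ne_zero]
    simpa [FreeGroup.toWord_eq_nil_iff] using hw
  -- divisibility
  have hmod : ((((g : SL2Z) : Matrix (Fin 2) (Fin 2) ℤ) i j : ℤ) : ZMod p)
      = (((1 : Matrix (Fin 2) (Fin 2) ℤ) i j : ℤ) : ZMod p) := by
    rw [hnat] at himg
    have := congrArg (fun x => ((x : Matrix.SpecialLinearGroup (Fin 2) (ZMod p))
        : Matrix (Fin 2) (Fin 2) (ZMod p)) i j) himg
    simp only [modp2, Matrix.SpecialLinearGroup.map_apply_coe] at this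
    simpa [Matrix.map_apply, Matrix.one_apply, apply_ite] using this
  have hdvd : (p:ℤ) ∣ (((g : SL2Z) : Matrix (Fin 2) (Fin 2) ℤ) i j
      - (1 : Matrix (Fin 2) (Fin 2) ℤ) i j) := by
    rwa [← ZMod.intCast_zmod_eq_zero_iff_dvd, Int.cast_sub, sub_eq_zero]
  have hd0 : ((g : SL2Z) : Matrix (Fin 2) (Fin 2) ℤ) i j
      - (1 : Matrix (Fin 2) (Fin 2) ℤ) i j ≠ 0 := sub_ne_zero.mpr hij
  have hple : (p:ℤ) ≤ |((g : SL2Z) : Matrix (Fin 2) (Fin 2) ℤ) i j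
      - (1 : Matrix (Fin 2) (Fin 2) ℤ) i j| :=
    Int.le_of_dvd (abs_pos.mpr hd0) ((dvd_abs _ _).mpr hdvd)
  have hbound : |((g : SL2Z) : Matrix (Fin 2) (Fin 2) ℤ) i j| ≤ (2*M)^n := by
    rw [hg, hn]
    exact lift_entry_bound a b ha hb w i j
  have hone : |(1 : Matrix (Fin 2) (Fin 2) ℤ) i j| ≤ 1 := by
    rw [Matrix.one_apply]; split_ifs <;> simp
  have hpow1 : (1:ℤ) ≤ (2*M)^n := one_le_pow₀ (by omega)
  have hpn : (p:ℤ) ≤ (4*M)^n := by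
    have h1 : (p:ℤ) ≤ (2*M)^n + 1 := le_trans hple (by
      calc |_ - _| ≤ |((g : SL2Z) : Matrix (Fin 2) (Fin 2) ℤ) i j|
            + |(1 : Matrix (Fin 2) (Fin 2) ℤ) i j| := abs_sub _ _
        _ ≤ (2*M)^n + 1 := add_le_add hbound hone)
    have h2 : (2*M)^n + 1 ≤ 2 * (2*M)^n := by omega
    have h3 : (2:ℤ) * (2*M)^n ≤ (4*M)^n := by
      calc (2:ℤ) * (2*M)^n ≤ 2^n * (2*M)^n := by
            have : (2:ℤ) ≤ 2^n := by
              calc (2:ℤ) = 2^1 := by norm_num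
                _ ≤ 2^n := pow_le_pow_right₀ (by norm_num) hn1
            nlinarith [pow_nonneg (by omega : (0:ℤ) ≤ 2*M) n]
        _ = (4*M)^n := by rw [← mul_pow]; ring_nf
    omega
  -- analytic part
  have hplog : Real.log p ≤ n * Real.log R := by
    have hppos : (0:ℝ) < p := by exact_mod_cast hp.pos
    have : (p:ℝ) ≤ R^n := by
      rw [hRdef, ← Int.cast_pow]
      exact_mod_cast hpn
    calc Real.log p ≤ Real.log (R^n) := Real.log_le_log hppos this
      _ = n * Real.log R := by rw [Real.log_pow]
  have hlogp : 0 < Real.log p := Real.log_pos (by exact_mod_cast hp.one_lt)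
  have : Real.log p ≤ (1/(2*Real.log R)) * Real.log p * Real.log R := by
    calc Real.log p ≤ (n:ℝ) * Real.log R := hplog
      _ ≤ (1/(2*Real.log R)) * Real.log p * Real.log R := by
          apply mul_le_mul_of_nonneg_right hlen hlogR.le
  have heq : (1/(2*Real.log R)) * Real.log p * Real.log R = Real.log p / 2 := by
    field_simp
  rw [heq] at this
  linarith
end

section
/- Let a, b be natural numbers with a ≥ 2 and b ≥ 2, and let A = [[1, a, 0], [0, 1, a], [0, 0, 1]] and B = [[1, 0, 0], [b, 1, 0], [0, b, 1]] in SL₃(ℤ). Then A⁴ and B⁴ generate a free subgroup of rank 2 of SL₃(ℤ); that is, the group homomorphism from the free group on two generators to SL₃(ℤ) sending the two generators to A⁴ and B⁴ respectively is injective. -/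
open Matrix Pointwise

abbrev SL3 := Matrix.SpecialLinearGroup (Fin 3) ℤ

/-- Upper unitriangular. -/
def UT (t c : ℤ) : SL3 :=
  ⟨!![1, t, c; 0, 1, t; 0, 0, 1], by simp [Matrix.det_fin_three, Matrix.vecHead, Matrix.vecTail]⟩

/-- Lower unitriangular. -/
def LoT (t c : ℤ) : SL3 :=
  ⟨!![1, 0, 0; t, 1, 0; c, t, 1], by simp [Matrix.det_fin_three, Matrix.vecHead, Matrix.vecTail]⟩

lemma UT_congr {t c t' c' : ℤ} (h1 : t = t') (h2 : c = c') : UT t c = UT t' c' := by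
  rw [h1, h2]

lemma LT_congr {t c t' c' : ℤ} (h1 : t = t') (h2 : c = c') : LoT t c = LoT t' c' := by
  rw [h1, h2]

lemma UT_mul (t c t' c' : ℤ) : UT t c * UT t' c' = UT (t + t') (c + c' + t * t') := by
  apply Subtype.ext
  show (UT t c).1 * (UT t' c').1 = _
  simp [UT, Matrix.mul_fin_three]
  ring_nf
  simp

lemma LT_mul (t c t' c' : ℤ) : LoT t c * LoT t' c' = LoT (t + t') (c + c' + t * t') := by
  apply Subtype.ext
  show (LoT t c).1 * (LoT t' c').1 = _
  simp [LoT, Matrix.mul_fin_three]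
  ring_nf

lemma UT_one : UT 0 0 = 1 := by
  apply Subtype.ext
  show (UT 0 0).1 = 1
  simp [UT, Matrix.one_fin_three]

lemma LT_one : LoT 0 0 = 1 := by
  apply Subtype.ext
  show (LoT 0 0).1 = 1
  simp [LoT, Matrix.one_fin_three]

lemma UT_inv (t c : ℤ) : (UT t c)⁻¹ = UT (-t) (t * t - c) := by
  symm
  apply eq_inv_of_mul_eq_one_right
  rw [UT_mul, UT_congr (show t + -t = 0 by ring) (show c + (t*t-c) + t*(-t) = 0 by ring), UT_one]

lemma LT_inv (t c : ℤ) : (LoT t c)⁻¹ = LoT (-t) (t * t - c) := by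
  symm
  apply eq_inv_of_mul_eq_one_right
  rw [LT_mul, LT_congr (show t + -t = 0 by ring) (show c + (t*t-c) + t*(-t) = 0 by ring), LT_one]

lemma UT_zpow (s : ℤ) (n : ℤ) :
    (UT (4*s) (6*s^2)) ^ n = UT (4*s*n) ((8*n^2 - 2*n)*s^2) := by
  induction n using Int.induction_on with
  | zero => rw [zpow_zero, UT_congr (show 4*s*(0:ℤ) = 0 by ring) (show ((8*(0:ℤ)^2 - 2*0)*s^2) = 0 by ring), UT_one]
  | succ k ih =>
      rw [_root_.zpow_add_one, ih, UT_mul]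
      exact UT_congr (by push_cast; ring) (by push_cast; ring)
  | pred k ih =>
      rw [_root_.zpow_sub_one, ih, UT_inv, UT_mul]
      exact UT_congr (by push_cast; ring) (by push_cast; ring)

lemma LT_zpow (s : ℤ) (n : ℤ) :
    (LoT (4*s) (6*s^2)) ^ n = LoT (4*s*n) ((8*n^2 - 2*n)*s^2) := by
  induction n using Int.induction_on with
  | zero => rw [zpow_zero, LT_congr (show 4*s*(0:ℤ) = 0 by ring) (show ((8*(0:ℤ)^2 - 2*0)*s^2) = 0 by ring), LT_one]
  | succ k ih =>
      rw [_root_.zpow_add_one, ih, LT_mul]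
      exact LT_congr (by push_cast; ring) (by push_cast; ring)
  | pred k ih =>
      rw [_root_.zpow_sub_one, ih, LT_inv, LT_mul]
      exact LT_congr (by push_cast; ring) (by push_cast; ring)

instance : SMul SL3 (Fin 3 → ℤ) := ⟨fun g v => g.1.mulVec v⟩

lemma SL3_smul_def (g : SL3) (v : Fin 3 → ℤ) : g • v = g.1.mulVec v := rfl

instance : MulAction SL3 (Fin 3 → ℤ) where
  one_smul v := by simp [SL3_smul_def]
  mul_smul g h v := by
    simp [SL3_smul_def, Matrix.mulVec_mulVec]

lemma UT_smul (t c : ℤ) (v : Fin 3 → ℤ) :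
    UT t c • v = ![v 0 + t * v 1 + c * v 2, v 1 + t * v 2, v 2] := by
  rw [SL3_smul_def]
  funext i
  fin_cases i <;>
    simp [SL3_smul_def, UT, Matrix.mulVec, dotProduct, Fin.sum_univ_three] <;> ring

lemma LoT_smul (t c : ℤ) (v : Fin 3 → ℤ) :
    LoT t c • v = ![v 0, t * v 0 + v 1, c * v 0 + t * v 1 + v 2] := by
  rw [SL3_smul_def]
  funext i
  fin_cases i <;>
    simp [SL3_smul_def, LoT, Matrix.mulVec, dotProduct, Fin.sum_univ_three] <;> ring

lemma key_ineq (t c x y z : ℤ) (ht : 8 ≤ |t|) (hc : 3 * |t| ≤ |c|)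
    (h1 : 2 * |x| < |y|) (h2 : 2 * |y| < |z|) :
    2 * |y + t * z| < |x + t * y + c * z| ∧ 2 * |z| < |y + t * z| := by
  have hb1 : |t| * |z| - |y| ≤ |y + t * z| := by
    have h := abs_add_le (y + t * z) (-y)
    rw [show y + t * z + -y = t * z by ring, abs_mul, abs_neg] at h
    omega
  have hb2 : |y + t * z| ≤ |y| + |t| * |z| := by
    have := abs_add_le y (t * z)
    rw [abs_mul] at this
    omega
  have hb3 : |c| * |z| - |t| * |y| - |x| ≤ |x + t * y + c * z| := by
    have h := abs_add_le (x + t * y + c * z) (-(x + t * y))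
    rw [show x + t * y + c * z + -(x + t * y) = c * z by ring, abs_mul, abs_neg] at h
    have h4 : |x + t * y| ≤ |x| + |t| * |y| := by
      have h5 := abs_add_le x (t * y)
      rw [abs_mul] at h5
      omega
    omega
  have hx0 : 0 ≤ |x| := abs_nonneg x
  have hz1 : 1 ≤ |z| := by omega
  constructor
  · nlinarith [mul_le_mul_of_nonneg_left hz1 (by omega : (0:ℤ) ≤ |t|),
      mul_lt_mul_of_pos_left h2 (by omega : (0:ℤ) < |t|),
      mul_le_mul_of_nonneg_right hc (abs_nonneg z)]
  · nlinarith [mul_le_mul_of_nonneg_right ht (abs_nonneg z)]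

/-- The x-dominant cone. -/
def XA : Set (Fin 3 → ℤ) := {v | 2 * |v 1| < |v 0| ∧ 2 * |v 2| < |v 1|}

/-- The z-dominant cone. -/
def XB : Set (Fin 3 → ℤ) := {v | 2 * |v 1| < |v 2| ∧ 2 * |v 0| < |v 1|}

lemma coeff_bounds (s n : ℤ) (hs : 2 ≤ s) (hn : n ≠ 0) :
    8 ≤ |4 * s * n| ∧ 3 * |4 * s * n| ≤ |(8 * n ^ 2 - 2 * n) * s ^ 2| := by
  have h1 : |4 * s * n| = 4 * s * |n| := by
    rw [abs_mul, abs_of_nonneg (by omega : (0:ℤ) ≤ 4 * s)]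
  have h2 : |(8 * n ^ 2 - 2 * n) * s ^ 2| = |8 * n ^ 2 - 2 * n| * s ^ 2 := by
    rw [abs_mul, abs_of_nonneg (by positivity : (0:ℤ) ≤ s ^ 2)]
  have hn1 : 1 ≤ |n| := by have := abs_pos.mpr hn; omega
  have h3 : 6 * n ^ 2 ≤ |8 * n ^ 2 - 2 * n| := by
    rcases lt_or_gt_of_ne hn with h | h
    · rw [abs_of_nonneg (by nlinarith)]; nlinarith
    · rw [abs_of_nonneg (by nlinarith)]; nlinarith
  have hnn : |n| * |n| = n ^ 2 := by rw [← abs_mul, ← sq, abs_of_nonneg (by positivity)]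
  constructor
  · rw [h1]; nlinarith
  · rw [h1, h2]
    have hsn : 2 ≤ s * |n| := by nlinarith
    have e1 : 12 * (s * |n|) ≤ 6 * ((s * |n|) * (s * |n|)) := by nlinarith
    have e2 : 6 * ((s * |n|) * (s * |n|)) = 6 * n ^ 2 * s ^ 2 := by
      rw [show (s * |n|) * (s * |n|) = (|n| * |n|) * (s * s) by ring, hnn]; ring
    have e3 := mul_le_mul_of_nonneg_right h3 (by positivity : (0:ℤ) ≤ s ^ 2)
    linarith

lemma sideA (s n : ℤ) (hs : 2 ≤ s) (hn : n ≠ 0) :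
    (UT (4 * s) (6 * s ^ 2)) ^ n • XB ⊆ XA := by
  rintro w ⟨v, hv, rfl⟩
  obtain ⟨hv1, hv2⟩ := hv
  obtain ⟨hb1, hb2⟩ := coeff_bounds s n hs hn
  rw [UT_zpow]
  show UT _ _ • v ∈ XA
  rw [UT_smul]
  obtain ⟨g1, g2⟩ := key_ineq (4 * s * n) ((8 * n ^ 2 - 2 * n) * s ^ 2) (v 0) (v 1) (v 2)
    hb1 hb2 hv2 hv1
  exact ⟨by simpa using g1, by simpa using g2⟩

lemma sideB (s n : ℤ) (hs : 2 ≤ s) (hn : n ≠ 0) :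
    (LoT (4 * s) (6 * s ^ 2)) ^ n • XA ⊆ XB := by
  rintro w ⟨v, hv, rfl⟩
  obtain ⟨hv1, hv2⟩ := hv
  obtain ⟨hb1, hb2⟩ := coeff_bounds s n hs hn
  rw [LT_zpow]
  show LoT _ _ • v ∈ XB
  rw [LoT_smul]
  obtain ⟨g1, g2⟩ := key_ineq (4 * s * n) ((8 * n ^ 2 - 2 * n) * s ^ 2) (v 2) (v 1) (v 0)
    hb1 hb2 hv2 hv1
  constructor
  · simpa [show v 2 + 4*s*n*(v 1) + (8*n^2-2*n)*s^2*(v 0) =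
      (8*n^2-2*n)*s^2*(v 0) + 4*s*n*(v 1) + v 2 by ring,
      show v 1 + 4*s*n*(v 0) = 4*s*n*(v 0) + v 1 by ring] using g1
  · simpa [show v 1 + 4*s*n*(v 0) = 4*s*n*(v 0) + v 1 by ring] using g2

/-- `A = [[1, a, 0], [0, 1, a], [0, 0, 1]]` as an element of `SL₃(ℤ)`. -/
def A3 (a : ℕ) : Matrix.SpecialLinearGroup (Fin 3) ℤ :=
  ⟨!![1, (a : ℤ), 0; 0, 1, (a : ℤ); 0, 0, 1], by
    simp [Matrix.det_fin_three, Matrix.vecHead, Matrix.vecTail]⟩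

/-- `B = [[1, 0, 0], [b, 1, 0], [0, b, 1]]` as an element of `SL₃(ℤ)`. -/
def B3 (b : ℕ) : Matrix.SpecialLinearGroup (Fin 3) ℤ :=
  ⟨!![1, 0, 0; (b : ℤ), 1, 0; 0, (b : ℤ), 1], by
    simp [Matrix.det_fin_three, Matrix.vecHead, Matrix.vecTail]⟩

lemma A3_eq (a : ℕ) : A3 a = UT (a : ℤ) 0 := Subtype.ext rfl

lemma B3_eq (b : ℕ) : B3 b = LoT (b : ℤ) 0 := Subtype.ext rfl

lemma UT_pow4 (t : ℤ) : (UT t 0) ^ 4 = UT (4 * t) (6 * t ^ 2) := by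
  have h2 : (UT t 0) ^ 2 = UT (2 * t) (t ^ 2) := by
    rw [pow_two, UT_mul]; exact UT_congr (by ring) (by ring)
  have h4 : ((UT t 0) ^ 2) ^ 2 = (UT t 0) ^ 4 := by rw [← pow_mul]
  rw [← h4, h2, pow_two, UT_mul]
  exact UT_congr (by ring) (by ring)

lemma LoT_pow4 (t : ℤ) : (LoT t 0) ^ 4 = LoT (4 * t) (6 * t ^ 2) := by
  have h2 : (LoT t 0) ^ 2 = LoT (2 * t) (t ^ 2) := by
    rw [pow_two, LT_mul]; exact LT_congr (by ring) (by ring)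
  have h4 : ((LoT t 0) ^ 2) ^ 2 = (LoT t 0) ^ 4 := by rw [← pow_mul]
  rw [← h4, h2, pow_two, LT_mul]
  exact LT_congr (by ring) (by ring)

lemma XA_XB_disj : Disjoint XA XB := by
  rw [Set.disjoint_left]
  rintro v ⟨h1, h2⟩ ⟨h3, h4⟩
  have := abs_nonneg (v 2)
  omega

/-- for natural numbers `a, b ≥ 2`, the matrices `A⁴` and `B⁴` (with
`A = [[1,a,0],[0,1,a],[0,0,1]]`, `B = [[1,0,0],[b,1,0],[0,b,1]]`) generate a free subgroup of
rank 2 of `SL₃(ℤ)`. -/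
theorem sl3_free_fourth_powers (a b : ℕ) (ha : 2 ≤ a) (hb : 2 ≤ b) :
    Function.Injective ⇑(FreeGroup.lift ![(A3 a) ^ 4, (B3 b) ^ 4]) := by
  classical
  set av : Fin 2 → SL3 := ![(A3 a) ^ 4, (B3 b) ^ 4] with hav
  have heq : (FreeGroup.lift av : FreeGroup (Fin 2) →* SL3) =
      (Monoid.CoprodI.lift fun i : Fin 2 => FreeGroup.lift fun _ : Unit => av i).comp
        (freeGroupEquivCoprodI (ι := Fin 2)).toMonoidHom := by
    ext i
    simp
  rw [heq, MonoidHom.coe_comp]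
  refine Function.Injective.comp ?_ (MulEquiv.injective _)
  let X' : Fin 2 → Set (Fin 3 → ℤ) := ![XA, XB]
  refine Monoid.CoprodI.lift_injective_of_ping_pong _ ?_ X' ?_ ?_ ?_
  · refine Or.inr ⟨0, ?_⟩
    refine le_trans ?_ (Cardinal.aleph0_le_mk (FreeGroup Unit))
    exact_mod_cast (Cardinal.nat_lt_aleph0 3).le
  · intro i
    fin_cases i
    · exact ⟨![9, 4, 1], by constructor <;> norm_num [XA, Matrix.cons_val_two]⟩
    · exact ⟨![1, 4, 9], by constructor <;> norm_num [XB, Matrix.cons_val_two]⟩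
  · intro i j hij
    fin_cases i <;> fin_cases j <;> simp_all [X']
    · exact XA_XB_disj
    · exact XA_XB_disj.symm
  · intro i j hij
    refine FreeGroup.freeGroupUnitEquivInt.forall_congr_left.mpr ?_
    intro n hne1
    change FreeGroup.lift (fun _ => av i) (FreeGroup.of () ^ n) • X' j ⊆ X' i
    simp only [map_zpow, FreeGroup.lift_apply_of]
    have hnne0 : n ≠ 0 := by
      rintro rfl
      apply hne1
      simp [FreeGroup.freeGroupUnitEquivInt]
    have ha' : 2 ≤ (a : ℤ) := by exact_mod_cast ha
    have hb' : 2 ≤ (b : ℤ) := by exact_mod_cast hb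
    fin_cases i <;> fin_cases j
    · exact absurd rfl hij
    · show (av 0) ^ n • X' 1 ⊆ X' 0
      have : av 0 = UT (4 * (a:ℤ)) (6 * (a:ℤ) ^ 2) := by
        rw [hav]; simp [A3_eq, UT_pow4]
      rw [this]
      show _ • XB ⊆ XA
      exact sideA (a : ℤ) n ha' hnne0
    · show (av 1) ^ n • X' 0 ⊆ X' 1
      have : av 1 = LoT (4 * (b:ℤ)) (6 * (b:ℤ) ^ 2) := by
        rw [hav]; simp [B3_eq, LoT_pow4]
      rw [this]
      show _ • XA ⊆ XB
      exact sideB (b : ℤ) n hb' hnne0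
    · exact absurd rfl hij
end

section
/- Fix an integer n ≥ 4 and natural numbers a, b with a ≥ 2 and b ≥ 2. Let A, B ∈ SL_n(ℤ) be the n×n matrices with A having 1's on the diagonal, a in each entry (i, i+1) of the superdiagonal, and 0 elsewhere, and B having 1's on the diagonal, b in each entry (i+1, i) of the subdiagonal, and 0 elsewhere. Then for every integer l ≥ 3(n−1), the matrices A^l and B^l generate a free subgroup of rank 2 of SL_n(ℤ); that is, the group homomorphism from the free group on two generators to SL_n(ℤ) sending the two generators to A^l and B^l respectively is injective. -/
/-- The `n×n` matrix with `1`'s on the diagonal, `a` in each superdiagonal entry `(i, i+1)`,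
and `0` elsewhere. -/
def upperA (R : Type*) [CommRing R] (n : ℕ) (a : R) : Matrix (Fin n) (Fin n) R :=
  Matrix.of fun i j => if (i : ℕ) = (j : ℕ) then 1 else if (j : ℕ) = (i : ℕ) + 1 then a else 0

/-- The `n×n` matrix with `1`'s on the diagonal, `b` in each subdiagonal entry `(i+1, i)`,
and `0` elsewhere. -/
def lowerB (R : Type*) [CommRing R] (n : ℕ) (b : R) : Matrix (Fin n) (Fin n) R :=
  Matrix.of fun i j => if (i : ℕ) = (j : ℕ) then 1 else if (i : ℕ) = (j : ℕ) + 1 then b else 0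

theorem upperA_det (R : Type*) [CommRing R] (n : ℕ) (a : R) : (upperA R n a).det = 1 := by
  rw [Matrix.det_of_upperTriangular]
  · simp [upperA]
  · intro i j hij
    have h : (j : ℕ) < (i : ℕ) := hij
    simp only [upperA, Matrix.of_apply]
    split_ifs with h1 h2
    · exfalso; omega
    · exfalso; omega
    · rfl

theorem lowerB_det (R : Type*) [CommRing R] (n : ℕ) (b : R) : (lowerB R n b).det = 1 := by
  rw [Matrix.det_of_lowerTriangular]
  · simp [lowerB]
  · intro i j hij
    have h : (i : ℕ) < (j : ℕ) := hij
    simp only [lowerB, Matrix.of_apply]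
    split_ifs with h1 h2
    · exfalso; omega
    · exfalso; omega
    · rfl

/-- The matrix `upperA` as an element of `SL_n(ℤ)`. -/
def Agen (n : ℕ) (a : ℤ) : Matrix.SpecialLinearGroup (Fin n) ℤ :=
  ⟨upperA ℤ n a, upperA_det ℤ n a⟩

/-- The matrix `lowerB` as an element of `SL_n(ℤ)`. -/
def Bgen (n : ℕ) (b : ℤ) : Matrix.SpecialLinearGroup (Fin n) ℤ :=
  ⟨lowerB ℤ n b, lowerB_det ℤ n b⟩

/-- Entrywise reduction modulo `p`, as a group homomorphism `SL_n(ℤ) →* SL_n(ZMod p)`. -/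
def modpn (n p : ℕ) :
    Matrix.SpecialLinearGroup (Fin n) ℤ →* Matrix.SpecialLinearGroup (Fin n) (ZMod p) :=
  Matrix.SpecialLinearGroup.map (Int.castRingHom (ZMod p))

/-! ### Auxiliary machinery for the ping-pong proof -/

namespace SlnFreeAux

open Matrix Finset


/-- Upper triangular Toeplitz matrix with coefficients `c`. -/
def polyN (n : ℕ) (c : ℕ → ℤ) : Matrix (Fin n) (Fin n) ℤ :=
  Matrix.of fun i j => if (i : ℕ) ≤ (j : ℕ) then c ((j : ℕ) - (i : ℕ)) else 0

lemma polyN_mul (n : ℕ) (c d : ℕ → ℤ) :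
    polyN n c * polyN n d = polyN n (fun k => ∑ t ∈ range (k + 1), c t * d (k - t)) := by
  ext i j
  rw [Matrix.mul_apply]
  set F : ℕ → ℤ := fun t => (if (i:ℕ) ≤ t then c (t - i) else 0) * (if t ≤ (j:ℕ) then d (j - t) else 0) with hF
  have hstep : ∑ t : Fin n, polyN n c i t * polyN n d t j = ∑ t ∈ range n, F t := by
    rw [← Fin.sum_univ_eq_sum_range]
    apply Finset.sum_congr rfl
    intro t _
    simp [F, polyN]
  rw [hstep]
  by_cases hij : (i:ℕ) ≤ (j:ℕ)
  · have h1 : ∑ t ∈ range n, F t = ∑ t ∈ Finset.Ico (i:ℕ) ((j:ℕ)+1), F t := by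
      rw [Finset.range_eq_Ico]
      rw [← Finset.sum_Ico_consecutive F (Nat.zero_le (i:ℕ)) (by omega : (i:ℕ) ≤ n)]
      rw [← Finset.sum_Ico_consecutive F (by omega : (i:ℕ) ≤ (j:ℕ)+1) (by omega : (j:ℕ)+1 ≤ n)]
      have hz1 : ∑ t ∈ Finset.Ico 0 (i:ℕ), F t = 0 :=
        Finset.sum_eq_zero fun t ht => by
          simp only [Finset.mem_Ico] at ht
          have h' : ¬ (i:ℕ) ≤ t := by omega
          simp [F, h']
      have hz2 : ∑ t ∈ Finset.Ico ((j:ℕ)+1) n, F t = 0 :=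
        Finset.sum_eq_zero fun t ht => by
          simp only [Finset.mem_Ico] at ht
          have h' : ¬ t ≤ (j:ℕ) := by omega
          simp [F, h']
      rw [hz1, hz2]; ring
    rw [h1, Finset.sum_Ico_eq_sum_range]
    have h2 : (j:ℕ) + 1 - (i:ℕ) = ((j:ℕ) - (i:ℕ)) + 1 := by omega
    rw [h2]
    simp only [polyN, Matrix.of_apply, if_pos hij]
    apply Finset.sum_congr rfl
    intro t ht
    simp only [Finset.mem_range] at ht
    have h3 : (i:ℕ) ≤ (i:ℕ) + t := by omega
    have h4 : (i:ℕ) + t ≤ (j:ℕ) := by omega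
    simp only [F, if_pos h3, if_pos h4]
    congr 2 <;> omega
  · have h1 : ∑ t ∈ range n, F t = 0 :=
      Finset.sum_eq_zero fun t ht => by
        by_cases h2 : (i:ℕ) ≤ t
        · have h' : ¬ t ≤ (j:ℕ) := by omega
          simp [F, h']
        · simp [F, h2]
    rw [h1]
    simp only [polyN, Matrix.of_apply]
    rw [if_neg hij]

lemma polyN_one (n : ℕ) (c : ℕ → ℤ) (h0 : c 0 = 1) (h : ∀ k, 1 ≤ k → c k = 0) :
    polyN n c = 1 := by
  ext i j
  simp only [polyN, Matrix.of_apply, Matrix.one_apply]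
  by_cases hij : i = j
  · subst hij; simp [h0]
  · have : ¬ ((i:ℕ) = (j:ℕ)) := fun h' => hij (Fin.ext h')
    split_ifs with h1
    · rw [h (j - i) (by omega)]
    · rfl



def cA (a : ℤ) : ℕ → ℤ := fun k => if k = 0 then 1 else if k = 1 then a else 0

lemma conv_cA_right (a : ℤ) (c : ℕ → ℤ) (k : ℕ) :
    ∑ t ∈ range (k + 1), c t * cA a (k - t)
      = c k + if 1 ≤ k then a * c (k - 1) else 0 := by
  match k with
  | 0 => simp [cA]
  | (k'+1) =>
    rw [Finset.sum_range_succ, Finset.sum_range_succ]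
    have h1 : ∀ t ∈ range k', c t * cA a (k' + 1 - t) = 0 := by
      intro t ht
      simp only [Finset.mem_range] at ht
      have : ¬ (k'+1-t = 0) := by omega
      have h2 : ¬ (k'+1-t = 1) := by omega
      simp [cA, this, h2]
    rw [Finset.sum_eq_zero h1]
    simp [cA]
    ring

lemma conv_cA_left (a : ℤ) (d : ℕ → ℤ) (k : ℕ) :
    ∑ t ∈ range (k + 1), cA a t * d (k - t)
      = d k + if 1 ≤ k then a * d (k - 1) else 0 := by
  match k with
  | 0 => simp [cA]
  | (k'+1) =>
    rw [Finset.sum_range_succ']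
    have h1 : ∑ t ∈ range (k' + 1), cA a (t+1) * d (k' + 1 - (t+1))
        = a * d k' := by
      match k' with
      | 0 => simp [cA]
      | (m+1) =>
        rw [Finset.sum_range_succ']
        have h2 : ∀ t ∈ range (m+1), cA a (t+2) * d (m + 2 - (t+2)) = 0 := by
          intro t ht; simp [cA]
        rw [Finset.sum_eq_zero h2]
        simp [cA]
    rw [h1]
    simp [cA]
    ring


-- copies from previous files assumed merged later; re-declare minimal

/-- coefficients of positive powers -/
def cpow (a : ℤ) (M : ℕ) : ℕ → ℤ := fun k => (M.choose k : ℤ) * a ^ k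

/-- coefficients of inverses of powers -/
def cneg (a : ℤ) (M : ℕ) : ℕ → ℤ := fun k => (-1) ^ k * ((M - 1 + k).choose k : ℤ) * a ^ k

lemma polyN_cA_pow (n : ℕ) (a : ℤ) (M : ℕ) :
    (polyN n (cA a)) ^ M = polyN n (cpow a M) := by
  induction M with
  | zero =>
    rw [pow_zero]
    refine (polyN_one n (cpow a 0) (by simp [cpow]) ?_).symm
    intro k hk
    simp [cpow, Nat.choose_eq_zero_of_lt (show 0 < k by omega)]
  | succ M ih =>
    rw [pow_succ, ih, polyN_mul]
    have hfun : (fun k => ∑ t ∈ range (k + 1), cpow a M t * cA a (k - t)) = cpow a (M+1) := by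
      funext k
      rw [conv_cA_right]
      match k with
      | 0 => simp [cpow]
      | (k'+1) =>
        simp only [cpow, Nat.add_sub_cancel, if_pos (by omega : 1 ≤ k'+1)]
        rw [Nat.choose_succ_succ' M k']
        push_cast
        ring
    rw [hfun]

lemma polyN_cneg_mul (n : ℕ) (a : ℤ) (M : ℕ) (hM : 1 ≤ M) :
    polyN n (cneg a M) * (polyN n (cA a)) ^ M = 1 := by
  induction M, hM using Nat.le_induction with
  | base =>
    rw [pow_one, polyN_mul]
    apply polyN_one
    · show (∑ t ∈ range (0 + 1), cneg a 1 t * cA a (0 - t)) = 1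
      rw [conv_cA_right]; simp [cneg]
    · intro k hk
      show (∑ t ∈ range (k + 1), cneg a 1 t * cA a (k - t)) = 0
      rw [conv_cA_right, if_pos hk]
      match k, hk with
      | (k'+1), _ =>
        simp only [cneg, Nat.add_sub_cancel]
        simp [Nat.choose_self, pow_succ]
        ring
  | succ M hM ih =>
    rw [pow_succ', ← mul_assoc]
    have key : polyN n (cneg a (M+1)) * polyN n (cA a) = polyN n (cneg a M) := by
      rw [polyN_mul]
      have hfun : (fun k => ∑ t ∈ range (k + 1), cneg a (M+1) t * cA a (k - t)) = cneg a M := by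
        funext k
        rw [conv_cA_right]
        match k with
        | 0 => simp [cneg]
        | (k'+1) =>
          simp only [cneg, Nat.add_sub_cancel, if_pos (by omega : 1 ≤ k'+1)]
          have h1 : M + (k' + 1) = (M + k') + 1 := by omega
          have h3 : M - 1 + (k' + 1) = M + k' := by omega
          rw [h1, h3, Nat.choose_succ_succ' (M + k') k']
          push_cast
          ring
      rw [hfun]
    rw [key, ih]


lemma dom_of_ratio (n : ℕ) (c : ℕ → ℕ) (h0 : 0 < c 0)
    (hr : ∀ k, k + 2 ≤ n → 4 * c k ≤ c (k + 1)) :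
    ∀ K, 1 ≤ K → K ≤ n - 1 → 2 * ∑ t ∈ range K, c t < c K := by
  have main : ∀ K, K ≤ n - 1 → 2 * ∑ t ∈ range (K + 1), c t < 3 * c K := by
    intro K
    induction K with
    | zero => intro _; rw [Finset.sum_range_one]; omega
    | succ K ih =>
      intro hK
      have h4 : 4 * c K ≤ c (K + 1) := hr K (by omega)
      have h' := ih (by omega)
      rw [Finset.sum_range_succ, Nat.mul_add]
      omega
  intro K hK1 hK2
  match K, hK1 with
  | (K' + 1), _ =>
    have h1 := main K' (by omega)
    have h4 : 4 * c K' ≤ c (K' + 1) := hr K' (by omega)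
    have h2 : ∑ t ∈ range (K' + 1), c t = ∑ t ∈ range K' , c t + c K' := Finset.sum_range_succ c K'
    omega

lemma ratio_pos (n a M : ℕ) (ha : 2 ≤ a) (hM : 3 * (n - 1) ≤ M) (hn : 2 ≤ n)
    (k : ℕ) (hk : k + 2 ≤ n) :
    4 * (M.choose k * a ^ k) ≤ M.choose (k + 1) * a ^ (k + 1) := by
  have h1 : M.choose (k + 1) * (k + 1) = M.choose k * (M - k) := Nat.choose_succ_right_eq M k
  refine Nat.le_of_mul_le_mul_right ?_ (show 0 < k + 1 by omega)
  calc 4 * (M.choose k * a ^ k) * (k + 1)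
      = M.choose k * (2 * (k + 1)) * (2 * a ^ k) := by ring
    _ ≤ M.choose k * (M - k) * (a * a ^ k) := by
        apply Nat.mul_le_mul
        · exact Nat.mul_le_mul_left _ (by omega)
        · exact Nat.mul_le_mul_right _ ha
    _ = (M.choose k * (M - k)) * a ^ (k + 1) := by ring
    _ = M.choose (k + 1) * a ^ (k + 1) * (k + 1) := by rw [← h1]; ring

lemma ratio_neg (n a M : ℕ) (ha : 2 ≤ a) (hM : 3 * (n - 1) ≤ M) (hM1 : 1 ≤ M) (hn : 2 ≤ n)
    (k : ℕ) (hk : k + 2 ≤ n) :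
    4 * ((M - 1 + k).choose k * a ^ k) ≤ (M - 1 + (k + 1)).choose (k + 1) * a ^ (k + 1) := by
  have he : M - 1 + (k + 1) = M + k := by omega
  rw [he]
  have h1 : (M + k).choose (k + 1) * (k + 1) = (M + k).choose k * (M + k - k) :=
    Nat.choose_succ_right_eq (M + k) k
  have he2 : M + k - k = M := by omega
  rw [he2] at h1
  have h2 : (M - 1 + k).choose k ≤ (M + k).choose k := Nat.choose_le_choose k (by omega)
  refine Nat.le_of_mul_le_mul_right ?_ (show 0 < k + 1 by omega)
  have h4k : 4 * (k + 1) ≤ a * M := by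
    have : 4 * (k + 1) ≤ 2 * M := by omega
    have h2M : 2 * M ≤ a * M := Nat.mul_le_mul_right M ha
    omega
  calc 4 * ((M - 1 + k).choose k * a ^ k) * (k + 1)
      = (M - 1 + k).choose k * (4 * (k + 1)) * a ^ k := by ring
    _ ≤ (M + k).choose k * (a * M) * a ^ k := by
        exact Nat.mul_le_mul (Nat.mul_le_mul h2 h4k) le_rfl
    _ = ((M + k).choose k * M) * a ^ (k + 1) := by ring
    _ = (M + k).choose (k + 1) * a ^ (k + 1) * (k + 1) := by rw [← h1]; ring



lemma key_up (n : ℕ) (hn : 2 ≤ n) (c u : ℕ → ℤ)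
    (hdom : ∀ K, 1 ≤ K → K ≤ n - 1 → 2 * ∑ t ∈ range K, |c t| < |c K|)
    (hu : ∀ j, j + 1 < n → |u j| < |u (j + 1)|)
    (i : ℕ) (hi : i + 1 < n) :
    |∑ k ∈ range (n - (i + 1)), c k * u (i + 1 + k)| <
      |∑ k ∈ range (n - i), c k * u (i + k)| := by
  set T := |u (n - 1)| with hTdef
  have hmono : ∀ j, j < n → |u j| ≤ T := by
    have aux : ∀ d j, j + d = n - 1 → |u j| ≤ T := by
      intro d
      induction d with
      | zero => intro j hj; rw [show j = n - 1 by omega]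
      | succ d ih =>
        intro j hj
        have h1 : j + 1 < n := by omega
        exact le_trans (le_of_lt (hu j h1)) (ih (j + 1) (by omega))
    intro j hj
    exact aux (n - 1 - j) j (by omega)
  have hT : 1 ≤ T := by
    have h1 := hu (n - 2) (by omega)
    have h2 : 0 ≤ |u (n - 2)| := abs_nonneg _
    rw [show n - 2 + 1 = n - 1 by omega] at h1
    omega
  set K := n - 1 - i with hKdef
  have hK1 : 1 ≤ K := by omega
  have hKn : n - i = K + 1 := by omega
  have hKn' : n - (i + 1) = K := by omega
  set S := ∑ t ∈ range K, |c t| with hSdef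
  have hS : 0 ≤ S := Finset.sum_nonneg fun t _ => abs_nonneg _
  have bound : ∀ m : ℕ, m + K ≤ n → |∑ k ∈ range K, c k * u (m + k)| ≤ S * T := by
    intro m hm
    calc |∑ k ∈ range K, c k * u (m + k)| ≤ ∑ k ∈ range K, |c k * u (m + k)| :=
          Finset.abs_sum_le_sum_abs _ _
      _ = ∑ k ∈ range K, |c k| * |u (m + k)| := by
          apply Finset.sum_congr rfl; intro k _; exact abs_mul _ _
      _ ≤ ∑ k ∈ range K, |c k| * T := by
          apply Finset.sum_le_sum
          intro k hk
          simp only [Finset.mem_range] at hk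
          exact mul_le_mul_of_nonneg_left (hmono (m + k) (by omega)) (abs_nonneg _)
      _ = S * T := by rw [← Finset.sum_mul]
  have upper : |∑ k ∈ range (n - (i + 1)), c k * u (i + 1 + k)| ≤ S * T := by
    rw [hKn']; exact bound (i + 1) (by omega)
  have hdomK := hdom K hK1 (by omega)
  have lower : |c K| * T - S * T ≤ |∑ k ∈ range (n - i), c k * u (i + k)| := by
    rw [hKn, Finset.sum_range_succ]
    set s := ∑ k ∈ range K, c k * u (i + k) with hsdef
    have hs : |s| ≤ S * T := bound i (by omega)
    have habs : |c K * u (i + K)| ≤ |s + c K * u (i + K)| + |s| := by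
      calc |c K * u (i + K)| = |(s + c K * u (i + K)) + (-s)| := by ring_nf
        _ ≤ |s + c K * u (i + K)| + |(-s)| := abs_add_le _ _
        _ = |s + c K * u (i + K)| + |s| := by rw [abs_neg]
    have hiK : i + K = n - 1 := by omega
    rw [hiK] at habs
    have hcK : |c K * u (n - 1)| = |c K| * T := by rw [abs_mul]
    rw [hiK]
    omega
  have final : S * T < |c K| * T - S * T := by
    have h2 : (2 * S) * T < |c K| * T :=
      mul_lt_mul_of_pos_right hdomK (by omega)
    nlinarith
  omega

lemma key_down (n : ℕ) (hn : 2 ≤ n) (c u : ℕ → ℤ)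
    (hdom : ∀ K, 1 ≤ K → K ≤ n - 1 → 2 * ∑ t ∈ range K, |c t| < |c K|)
    (hu : ∀ j, j + 1 < n → |u (j + 1)| < |u j|)
    (i : ℕ) (hi : i + 1 < n) :
    |∑ k ∈ range (i + 1), c k * u (i - k)| <
      |∑ k ∈ range (i + 1 + 1), c k * u (i + 1 - k)| := by
  set T := |u 0| with hTdef
  have hmono : ∀ j, j < n → |u j| ≤ T := by
    intro j
    induction j with
    | zero => intro _; exact le_refl _
    | succ j ih =>
      intro hj
      exact le_trans (le_of_lt (hu j hj)) (ih (by omega))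
  have hT : 1 ≤ T := by
    have h1 := hu 0 (by omega)
    norm_num at h1
    have h2 : 0 ≤ |u 1| := abs_nonneg _
    omega
  set S := ∑ t ∈ range (i + 1), |c t| with hSdef
  have hS : 0 ≤ S := Finset.sum_nonneg fun t _ => abs_nonneg _
  have bound : ∀ m : ℕ, m < n → |∑ k ∈ range (i + 1), c k * u (m - k)| ≤ S * T := by
    intro m hm
    calc |∑ k ∈ range (i + 1), c k * u (m - k)| ≤ ∑ k ∈ range (i + 1), |c k * u (m - k)| :=
          Finset.abs_sum_le_sum_abs _ _
      _ = ∑ k ∈ range (i + 1), |c k| * |u (m - k)| := by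
          apply Finset.sum_congr rfl; intro k _; exact abs_mul _ _
      _ ≤ ∑ k ∈ range (i + 1), |c k| * T := by
          apply Finset.sum_le_sum
          intro k hk
          exact mul_le_mul_of_nonneg_left (hmono (m - k) (by omega)) (abs_nonneg _)
      _ = S * T := by rw [← Finset.sum_mul]
  have upper : |∑ k ∈ range (i + 1), c k * u (i - k)| ≤ S * T := bound i (by omega)
  have hdomK := hdom (i + 1) (by omega) (by omega)
  have lower : |c (i + 1)| * T - S * T ≤ |∑ k ∈ range (i + 1 + 1), c k * u (i + 1 - k)| := by
    rw [Finset.sum_range_succ, show i + 1 - (i + 1) = 0 by omega]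
    set s := ∑ k ∈ range (i + 1), c k * u (i + 1 - k) with hsdef
    have hs : |s| ≤ S * T := bound (i + 1) (by omega)
    have habs : |c (i + 1) * u 0| ≤ |s + c (i + 1) * u 0| + |s| := by
      calc |c (i + 1) * u 0|
          = |(s + c (i + 1) * u 0) + (-s)| := by ring_nf
        _ ≤ |s + c (i + 1) * u 0| + |(-s)| := abs_add_le _ _
        _ = |s + c (i + 1) * u 0| + |s| := by rw [abs_neg]
    have hcK : |c (i + 1) * u 0| = |c (i + 1)| * T := by rw [abs_mul]
    omega
  have final : S * T < |c (i + 1)| * T - S * T := by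
    have h2 : (2 * S) * T < |c (i + 1)| * T :=
      mul_lt_mul_of_pos_right hdomK (by omega)
    nlinarith
  omega




/-- extension of a vector on `Fin n` to `ℕ` by zero -/
def uext (n : ℕ) (v : Fin n → ℤ) : ℕ → ℤ := fun j => if h : j < n then v ⟨j, h⟩ else 0

lemma polyN_mulVec (n : ℕ) (c : ℕ → ℤ) (v : Fin n → ℤ) (i : Fin n) :
    (polyN n c *ᵥ v) i = ∑ k ∈ range (n - (i : ℕ)), c k * uext n v ((i : ℕ) + k) := by
  set F : ℕ → ℤ := fun j => (if (i : ℕ) ≤ j then c (j - (i : ℕ)) else 0) * uext n v j with hF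
  have h1 : (polyN n c *ᵥ v) i = ∑ j ∈ range n, F j := by
    rw [Matrix.mulVec, dotProduct, ← Fin.sum_univ_eq_sum_range]
    apply Finset.sum_congr rfl
    intro j _
    simp [F, polyN, uext, j.isLt]
  have hz : ∑ j ∈ Finset.Ico 0 (i : ℕ), F j = 0 :=
    Finset.sum_eq_zero fun j hj => by
      simp only [Finset.mem_Ico] at hj
      have : ¬ (i : ℕ) ≤ j := by omega
      simp [F, this]
  have h3 : ∑ j ∈ range n, F j = ∑ k ∈ range (n - (i : ℕ)), F ((i : ℕ) + k) :=
    calc ∑ j ∈ range n, F j = ∑ j ∈ Finset.Ico 0 n, F j := by rw [Finset.range_eq_Ico]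
      _ = ∑ j ∈ Finset.Ico 0 (i : ℕ), F j + ∑ j ∈ Finset.Ico (i : ℕ) n, F j :=
          (Finset.sum_Ico_consecutive F (Nat.zero_le _) (le_of_lt i.isLt)).symm
      _ = ∑ j ∈ Finset.Ico (i : ℕ) n, F j := by rw [hz, zero_add]
      _ = ∑ k ∈ range (n - (i : ℕ)), F ((i : ℕ) + k) := Finset.sum_Ico_eq_sum_range F _ _
  rw [h1, h3]
  apply Finset.sum_congr rfl
  intro k hk
  simp only [F, if_pos (Nat.le_add_right (i : ℕ) k), Nat.add_sub_cancel_left]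

lemma polyN_transpose_mulVec (n : ℕ) (c : ℕ → ℤ) (v : Fin n → ℤ) (i : Fin n) :
    ((polyN n c)ᵀ *ᵥ v) i = ∑ k ∈ range ((i : ℕ) + 1), c k * uext n v ((i : ℕ) - k) := by
  set F : ℕ → ℤ := fun j => (if j ≤ (i : ℕ) then c ((i : ℕ) - j) else 0) * uext n v j with hF
  have h1 : ((polyN n c)ᵀ *ᵥ v) i = ∑ j ∈ range n, F j := by
    rw [Matrix.mulVec, dotProduct, ← Fin.sum_univ_eq_sum_range]
    apply Finset.sum_congr rfl
    intro j _
    simp [F, polyN, Matrix.transpose_apply, uext, j.isLt]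
  have h2 : ∑ j ∈ range n, F j = ∑ j ∈ range ((i : ℕ) + 1), F j := by
    symm
    apply Finset.sum_subset
    · intro x hx
      simp only [Finset.mem_range] at *
      have := i.isLt; omega
    · intro x _ hx
      simp only [Finset.mem_range] at hx
      have : ¬ x ≤ (i : ℕ) := by omega
      simp [F, this]
  rw [h1, h2, ← Finset.sum_range_reflect F ((i : ℕ) + 1)]
  apply Finset.sum_congr rfl
  intro k hk
  simp only [Finset.mem_range] at hk
  have hk' : k ≤ (i : ℕ) := by omega
  have e1 : (i : ℕ) + 1 - 1 - k = (i : ℕ) - k := by omega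
  have e2 : (i : ℕ) - k ≤ (i : ℕ) := by omega
  have e3 : (i : ℕ) - ((i : ℕ) - k) = k := by omega
  rw [e1]
  simp only [F, if_pos e2, e3]

/-- vectors with strictly increasing absolute values of coordinates -/
def Xup (n : ℕ) : Set (Fin n → ℤ) :=
  {v | ∀ j : ℕ, j + 1 < n → |uext n v j| < |uext n v (j + 1)|}

/-- vectors with strictly decreasing absolute values of coordinates -/
def Xdown (n : ℕ) : Set (Fin n → ℤ) :=
  {v | ∀ j : ℕ, j + 1 < n → |uext n v (j + 1)| < |uext n v j|}


/-! ### Matrix identities for the generators -/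

lemma upperA_eq_polyN (n : ℕ) (a : ℤ) : upperA ℤ n a = polyN n (cA a) := by
  ext i j
  simp only [upperA, polyN, cA, Matrix.of_apply]
  split_ifs <;> omega

lemma lowerB_eq_transpose (n : ℕ) (b : ℤ) : lowerB ℤ n b = (upperA ℤ n b)ᵀ := by
  ext i j
  simp only [lowerB, upperA, Matrix.transpose_apply, Matrix.of_apply]
  split_ifs <;> omega

lemma coe_inv_eq {n : ℕ} (g : Matrix.SpecialLinearGroup (Fin n) ℤ)
    (P : Matrix (Fin n) (Fin n) ℤ) (h : P * (g : Matrix (Fin n) (Fin n) ℤ) = 1) :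
    ((g⁻¹ : Matrix.SpecialLinearGroup (Fin n) ℤ) : Matrix (Fin n) (Fin n) ℤ) = P := by
  have h3 : (g : Matrix (Fin n) (Fin n) ℤ) * P = 1 := mul_eq_one_comm.mp h
  have h4 : ((g⁻¹ : Matrix.SpecialLinearGroup (Fin n) ℤ) : Matrix (Fin n) (Fin n) ℤ) * g = 1 := by
    rw [← Matrix.SpecialLinearGroup.coe_mul, inv_mul_cancel g,
      Matrix.SpecialLinearGroup.coe_one]
  calc ((g⁻¹ : Matrix.SpecialLinearGroup (Fin n) ℤ) : Matrix (Fin n) (Fin n) ℤ)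
      = ↑(g⁻¹) * ((g : Matrix (Fin n) (Fin n) ℤ) * P) := by rw [h3, mul_one]
    _ = (↑(g⁻¹) * (g : Matrix (Fin n) (Fin n) ℤ)) * P := by rw [mul_assoc]
    _ = P := by rw [h4, one_mul]

lemma Agen_pow_coe (n : ℕ) (a : ℤ) (M : ℕ) :
    ((Agen n a ^ M : Matrix.SpecialLinearGroup (Fin n) ℤ) : Matrix (Fin n) (Fin n) ℤ)
      = polyN n (cpow a M) := by
  rw [Matrix.SpecialLinearGroup.coe_pow]
  have h1 : ((Agen n a : Matrix.SpecialLinearGroup (Fin n) ℤ) : Matrix (Fin n) (Fin n) ℤ)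
      = polyN n (cA a) := upperA_eq_polyN n a
  rw [h1, polyN_cA_pow]

lemma Agen_inv_coe (n : ℕ) (a : ℤ) (M : ℕ) (hM : 1 ≤ M) :
    (((Agen n a ^ M)⁻¹ : Matrix.SpecialLinearGroup (Fin n) ℤ) : Matrix (Fin n) (Fin n) ℤ)
      = polyN n (cneg a M) := by
  apply coe_inv_eq
  rw [Agen_pow_coe, ← polyN_cA_pow]
  exact polyN_cneg_mul n a M hM

lemma Bgen_pow_coe (n : ℕ) (b : ℤ) (M : ℕ) :
    ((Bgen n b ^ M : Matrix.SpecialLinearGroup (Fin n) ℤ) : Matrix (Fin n) (Fin n) ℤ)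
      = (polyN n (cpow b M))ᵀ := by
  rw [Matrix.SpecialLinearGroup.coe_pow]
  have h1 : ((Bgen n b : Matrix.SpecialLinearGroup (Fin n) ℤ) : Matrix (Fin n) (Fin n) ℤ)
      = (upperA ℤ n b)ᵀ := lowerB_eq_transpose n b
  rw [h1, ← Matrix.transpose_pow, upperA_eq_polyN, polyN_cA_pow]

lemma Bgen_inv_coe (n : ℕ) (b : ℤ) (M : ℕ) (hM : 1 ≤ M) :
    (((Bgen n b ^ M)⁻¹ : Matrix.SpecialLinearGroup (Fin n) ℤ) : Matrix (Fin n) (Fin n) ℤ)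
      = (polyN n (cneg b M))ᵀ := by
  apply coe_inv_eq
  rw [Bgen_pow_coe, ← Matrix.transpose_mul, mul_eq_one_comm.mp
    (by rw [← polyN_cA_pow]; exact polyN_cneg_mul n b M hM), Matrix.transpose_one]

/-! ### Domination of the coefficient sequences -/

lemma hdom_cpow (n a M : ℕ) (ha : 2 ≤ a) (hn : 2 ≤ n) (hM : 3 * (n - 1) ≤ M) :
    ∀ K, 1 ≤ K → K ≤ n - 1 →
      2 * ∑ t ∈ range K, |cpow (a : ℤ) M t| < |cpow (a : ℤ) M K| := by
  have habs : ∀ k, |cpow (a : ℤ) M k| = ((M.choose k * a ^ k : ℕ) : ℤ) := by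
    intro k
    rw [cpow, abs_of_nonneg (by positivity)]
    push_cast
    ring
  intro K h1 h2
  rw [habs]
  have hsum : ∑ t ∈ range K, |cpow (a : ℤ) M t|
      = ((∑ t ∈ range K, M.choose t * a ^ t : ℕ) : ℤ) := by
    push_cast
    exact Finset.sum_congr rfl fun t _ => by rw [habs]; push_cast; ring
  rw [hsum]
  exact_mod_cast dom_of_ratio n _ (by simp)
    (fun k hk => ratio_pos n a M ha hM hn k hk) K h1 h2

lemma hdom_cneg (n a M : ℕ) (ha : 2 ≤ a) (hn : 2 ≤ n) (hM : 3 * (n - 1) ≤ M) (hM1 : 1 ≤ M) :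
    ∀ K, 1 ≤ K → K ≤ n - 1 →
      2 * ∑ t ∈ range K, |cneg (a : ℤ) M t| < |cneg (a : ℤ) M K| := by
  have habs : ∀ k, |cneg (a : ℤ) M k| = (((M - 1 + k).choose k * a ^ k : ℕ) : ℤ) := by
    intro k
    rw [cneg, abs_mul, abs_mul, abs_pow, abs_neg, abs_one, one_pow, one_mul,
      abs_of_nonneg (by positivity : (0:ℤ) ≤ ((M - 1 + k).choose k : ℤ)),
      abs_of_nonneg (by positivity : (0:ℤ) ≤ (a : ℤ) ^ k)]
    push_cast
    ring
  intro K h1 h2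
  rw [habs]
  have hsum : ∑ t ∈ range K, |cneg (a : ℤ) M t|
      = ((∑ t ∈ range K, (M - 1 + t).choose t * a ^ t : ℕ) : ℤ) := by
    push_cast
    exact Finset.sum_congr rfl fun t _ => by rw [habs]; push_cast; ring
  rw [hsum]
  exact_mod_cast dom_of_ratio n _ (by simp)
    (fun k hk => ratio_neg n a M ha hM hM1 hn k hk) K h1 h2

/-! ### Membership lemmas -/

lemma mem_Xdown (n : ℕ) (hn : 2 ≤ n) (c : ℕ → ℤ)
    (hdom : ∀ K, 1 ≤ K → K ≤ n - 1 → 2 * ∑ t ∈ range K, |c t| < |c K|)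
    (v : Fin n → ℤ) (hv : v ∈ Xup n) : polyN n c *ᵥ v ∈ Xdown n := by
  intro j hj
  have e1 : uext n (polyN n c *ᵥ v) j = ∑ k ∈ range (n - j), c k * uext n v (j + k) := by
    rw [uext, dif_pos (show j < n by omega), polyN_mulVec]
  have e2 : uext n (polyN n c *ᵥ v) (j + 1)
      = ∑ k ∈ range (n - (j + 1)), c k * uext n v (j + 1 + k) := by
    rw [uext, dif_pos hj, polyN_mulVec]
  rw [e1, e2]
  exact key_up n hn c (uext n v) hdom hv j hj

lemma mem_Xup (n : ℕ) (hn : 2 ≤ n) (c : ℕ → ℤ)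
    (hdom : ∀ K, 1 ≤ K → K ≤ n - 1 → 2 * ∑ t ∈ range K, |c t| < |c K|)
    (v : Fin n → ℤ) (hv : v ∈ Xdown n) : (polyN n c)ᵀ *ᵥ v ∈ Xup n := by
  intro j hj
  have e1 : uext n ((polyN n c)ᵀ *ᵥ v) j = ∑ k ∈ range (j + 1), c k * uext n v (j - k) := by
    rw [uext, dif_pos (show j < n by omega), polyN_transpose_mulVec]
  have e2 : uext n ((polyN n c)ᵀ *ᵥ v) (j + 1)
      = ∑ k ∈ range (j + 1 + 1), c k * uext n v (j + 1 - k) := by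
    rw [uext, dif_pos hj, polyN_transpose_mulVec]
  rw [e1, e2]
  exact key_down n hn c (uext n v) hdom hv j hj

/-! ### The action of `SL_n(ℤ)` on `ℤ^n` -/

instance slAction (n : ℕ) : MulAction (Matrix.SpecialLinearGroup (Fin n) ℤ) (Fin n → ℤ) where
  smul g v := (g : Matrix (Fin n) (Fin n) ℤ) *ᵥ v
  one_smul v := by
    show ((1 : Matrix.SpecialLinearGroup (Fin n) ℤ) : Matrix (Fin n) (Fin n) ℤ) *ᵥ v = v
    rw [Matrix.SpecialLinearGroup.coe_one, Matrix.one_mulVec]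
  mul_smul g h v := by
    show ((g * h : Matrix.SpecialLinearGroup (Fin n) ℤ) : Matrix (Fin n) (Fin n) ℤ) *ᵥ v
      = (g : Matrix (Fin n) (Fin n) ℤ) *ᵥ ((h : Matrix (Fin n) (Fin n) ℤ) *ᵥ v)
    rw [Matrix.SpecialLinearGroup.coe_mul, ← Matrix.mulVec_mulVec]

lemma sl_smul_def {n : ℕ} (g : Matrix.SpecialLinearGroup (Fin n) ℤ) (v : Fin n → ℤ) :
    g • v = (g : Matrix (Fin n) (Fin n) ℤ) *ᵥ v := rfl

/-! ### The two ping-pong conditions -/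

lemma Apow_smul (n a : ℕ) (hn : 2 ≤ n) (ha : 2 ≤ a) (l : ℕ) (hl : 3 * (n - 1) ≤ l)
    (m : ℤ) (hm : m ≠ 0) (v : Fin n → ℤ) (hv : v ∈ Xup n) :
    ((Agen n (a : ℤ)) ^ l) ^ m • v ∈ Xdown n := by
  rcases hm.lt_or_gt with hneg | hpos
  · set M := (-m).toNat with hMdef
    have hM1 : 1 ≤ M := by omega
    have hLM : 3 * (n - 1) ≤ l * M := le_trans hl (Nat.le_mul_of_pos_right l (by omega))
    have h1 : ((Agen n (a : ℤ)) ^ l) ^ m = ((Agen n (a : ℤ)) ^ (l * M))⁻¹ := by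
      rw [show m = -(M : ℤ) by omega, _root_.zpow_neg, zpow_natCast, ← pow_mul]
    rw [h1, sl_smul_def, Agen_inv_coe n (a : ℤ) (l * M) (by omega)]
    exact mem_Xdown n hn _ (hdom_cneg n a (l * M) ha hn hLM (by omega)) v hv
  · set M := m.toNat with hMdef
    have hM1 : 1 ≤ M := by omega
    have hLM : 3 * (n - 1) ≤ l * M := le_trans hl (Nat.le_mul_of_pos_right l (by omega))
    have h1 : ((Agen n (a : ℤ)) ^ l) ^ m = (Agen n (a : ℤ)) ^ (l * M) := by
      rw [show m = (M : ℤ) by omega, zpow_natCast, ← pow_mul]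
    rw [h1, sl_smul_def, Agen_pow_coe]
    exact mem_Xdown n hn _ (hdom_cpow n a (l * M) ha hn hLM) v hv

lemma Bpow_smul (n b : ℕ) (hn : 2 ≤ n) (hb : 2 ≤ b) (l : ℕ) (hl : 3 * (n - 1) ≤ l)
    (m : ℤ) (hm : m ≠ 0) (v : Fin n → ℤ) (hv : v ∈ Xdown n) :
    ((Bgen n (b : ℤ)) ^ l) ^ m • v ∈ Xup n := by
  rcases hm.lt_or_gt with hneg | hpos
  · set M := (-m).toNat with hMdef
    have hM1 : 1 ≤ M := by omega
    have hLM : 3 * (n - 1) ≤ l * M := le_trans hl (Nat.le_mul_of_pos_right l (by omega))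
    have h1 : ((Bgen n (b : ℤ)) ^ l) ^ m = ((Bgen n (b : ℤ)) ^ (l * M))⁻¹ := by
      rw [show m = -(M : ℤ) by omega, _root_.zpow_neg, zpow_natCast, ← pow_mul]
    rw [h1, sl_smul_def, Bgen_inv_coe n (b : ℤ) (l * M) (by omega)]
    exact mem_Xup n hn _ (hdom_cneg n b (l * M) hb hn hLM (by omega)) v hv
  · set M := m.toNat with hMdef
    have hM1 : 1 ≤ M := by omega
    have hLM : 3 * (n - 1) ≤ l * M := le_trans hl (Nat.le_mul_of_pos_right l (by omega))
    have h1 : ((Bgen n (b : ℤ)) ^ l) ^ m = (Bgen n (b : ℤ)) ^ (l * M) := by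
      rw [show m = (M : ℤ) by omega, zpow_natCast, ← pow_mul]
    rw [h1, sl_smul_def, Bgen_pow_coe]
    exact mem_Xup n hn _ (hdom_cpow n b (l * M) hb hn hLM) v hv

/-! ### Nonemptiness and disjointness -/

lemma Xdown_nonempty (n : ℕ) : (Xdown n).Nonempty := by
  refine ⟨fun i => (n : ℤ) - (i : ℕ), ?_⟩
  intro j hj
  rw [uext, uext, dif_pos hj, dif_pos (show j < n by omega)]
  have e1 : ((⟨j + 1, hj⟩ : Fin n) : ℕ) = j + 1 := rfl
  have e2 : ((⟨j, show j < n by omega⟩ : Fin n) : ℕ) = j := rfl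
  rw [e1, e2]
  rw [abs_of_nonneg (by push_cast; omega), abs_of_nonneg (by push_cast; omega)]
  push_cast
  omega

lemma Xup_nonempty (n : ℕ) : (Xup n).Nonempty := by
  refine ⟨fun i => ((i : ℕ) : ℤ) + 1, ?_⟩
  intro j hj
  rw [uext, uext, dif_pos hj, dif_pos (show j < n by omega)]
  have e1 : ((⟨j + 1, hj⟩ : Fin n) : ℕ) = j + 1 := rfl
  have e2 : ((⟨j, show j < n by omega⟩ : Fin n) : ℕ) = j := rfl
  rw [e1, e2]
  rw [abs_of_nonneg (by push_cast; omega), abs_of_nonneg (by push_cast; omega)]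
  push_cast
  omega

lemma Xdown_disj_Xup (n : ℕ) (hn : 2 ≤ n) : Disjoint (Xdown n) (Xup n) := by
  rw [Set.disjoint_left]
  intro v hvd hvu
  have h1 := hvd 0 (by omega)
  have h2 := hvu 0 (by omega)
  omega

end SlnFreeAux

open Pointwise in
/-- for `n ≥ 4` and natural numbers `a, b ≥ 2`, with `A, B ∈ SL_n(ℤ)` the
matrices with `1`'s on the diagonal and `a` on the superdiagonal (resp. `b` on the
subdiagonal) and `0` elsewhere, for every `l ≥ 3(n-1)` the matrices `A^l` and `B^l` generate
a free subgroup of rank 2 of `SL_n(ℤ)`. -/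
theorem sln_free_powers (n : ℕ) (hn : 4 ≤ n) (a b : ℕ) (ha : 2 ≤ a) (hb : 2 ≤ b)
    (l : ℕ) (hl : 3 * (n - 1) ≤ l) :
    Function.Injective ⇑(FreeGroup.lift ![(Agen n (a : ℤ)) ^ l, (Bgen n (b : ℤ)) ^ l]) := by
  classical
  have hn2 : 2 ≤ n := by omega
  set gens : Fin 2 → Matrix.SpecialLinearGroup (Fin n) ℤ :=
    ![(Agen n (a : ℤ)) ^ l, (Bgen n (b : ℤ)) ^ l] with hgens
  have heq : FreeGroup.lift gens =
      (Monoid.CoprodI.lift fun i => FreeGroup.lift fun _ => gens i).comp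
        (@freeGroupEquivCoprodI (Fin 2)).toMonoidHom := by
    ext i
    simp
  rw [heq, MonoidHom.coe_comp]
  refine Function.Injective.comp ?_ (MulEquiv.injective _)
  refine Monoid.CoprodI.lift_injective_of_ping_pong _ ?_
    (![SlnFreeAux.Xdown n, SlnFreeAux.Xup n]) ?_ ?_ ?_
  · right
    refine ⟨0, ?_⟩
    rw [FreeGroup.freeGroupUnitEquivInt.cardinal_eq, Cardinal.mk_denumerable]
    exact le_of_lt (Cardinal.nat_lt_aleph0 3)
  · intro i
    fin_cases i
    · exact SlnFreeAux.Xdown_nonempty n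
    · exact SlnFreeAux.Xup_nonempty n
  · intro i j hij
    fin_cases i <;> fin_cases j
    · exact absurd rfl hij
    · show Disjoint (SlnFreeAux.Xdown n) (SlnFreeAux.Xup n)
      exact SlnFreeAux.Xdown_disj_Xup n hn2
    · show Disjoint (SlnFreeAux.Xup n) (SlnFreeAux.Xdown n)
      exact (SlnFreeAux.Xdown_disj_Xup n hn2).symm
    · exact absurd rfl hij
  · intro i j hij
    fin_cases i <;> fin_cases j
    · exact absurd rfl hij
    · refine FreeGroup.freeGroupUnitEquivInt.forall_congr_left.mpr ?_
      intro m hne1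
      change FreeGroup.lift (fun _ => gens 0) (FreeGroup.of () ^ m) •
        (![SlnFreeAux.Xdown n, SlnFreeAux.Xup n]) 1 ⊆
        (![SlnFreeAux.Xdown n, SlnFreeAux.Xup n]) 0
      simp only [map_zpow, FreeGroup.lift_apply_of]
      have hm0 : m ≠ 0 := by
        rintro rfl
        apply hne1
        simp [FreeGroup.freeGroupUnitEquivInt]
      intro x hx
      rw [Set.mem_smul_set] at hx
      obtain ⟨v, hv, rfl⟩ := hx
      have hv' : v ∈ SlnFreeAux.Xup n := by simpa using hv
      have hg : gens 0 = (Agen n (a : ℤ)) ^ l := by simp [gens]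
      show gens 0 ^ m • v ∈ SlnFreeAux.Xdown n
      rw [hg]
      exact SlnFreeAux.Apow_smul n a hn2 ha l hl m hm0 v hv'
    · refine FreeGroup.freeGroupUnitEquivInt.forall_congr_left.mpr ?_
      intro m hne1
      change FreeGroup.lift (fun _ => gens 1) (FreeGroup.of () ^ m) •
        (![SlnFreeAux.Xdown n, SlnFreeAux.Xup n]) 0 ⊆
        (![SlnFreeAux.Xdown n, SlnFreeAux.Xup n]) 1
      simp only [map_zpow, FreeGroup.lift_apply_of]
      have hm0 : m ≠ 0 := by
        rintro rfl
        apply hne1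
        simp [FreeGroup.freeGroupUnitEquivInt]
      intro x hx
      rw [Set.mem_smul_set] at hx
      obtain ⟨v, hv, rfl⟩ := hx
      have hv' : v ∈ SlnFreeAux.Xdown n := by simpa using hv
      have hg : gens 1 = (Bgen n (b : ℤ)) ^ l := by simp [gens]
      show gens 1 ^ m • v ∈ SlnFreeAux.Xup n
      rw [hg]
      exact SlnFreeAux.Bpow_smul n b hn2 hb l hl m hm0 v hv'
    · exact absurd rfl hij
end

section
/- Let n ≥ 2 be an integer, q a prime, a an integer with a ≡ 1 (mod q), and let t be a natural number with n − 1 < q^{t+1}. Let A ∈ SL_n(ℤ) be the n×n matrix with 1's on the diagonal, a in each entry (i, i+1) of the superdiagonal, and 0 elsewhere. Then for every natural number r ≥ 1, the reduction modulo q of A^{r·q^{t+1} + 1} equals the matrix A' ∈ SL_n(ZMod q) having 1's on the diagonal, 1 in each entry (i, i+1) of the superdiagonal, and 0 elsewhere. (This rests on the fact that q divides the binomial coefficient C(r·q^{t+1} + 1, i) for every i with 2 ≤ i ≤ n − 1.) -/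
lemma key_dvd (q : ℕ) (hq : q.Prime) (m N e : ℕ) (hN : q ^ m ∣ N) (he0 : 0 < e)
    (heN : e ≤ N) (he : e < q ^ m) : q ∣ N.choose e := by
  have hN0 : 0 < N := lt_of_lt_of_le he0 heN
  have hC : 0 < N.choose e := Nat.choose_pos heN
  obtain ⟨n, rfl⟩ : ∃ n, N = n + 1 := ⟨N - 1, by omega⟩
  obtain ⟨k, rfl⟩ : ∃ k, e = k + 1 := ⟨e - 1, by omega⟩
  have hid : (n + 1) * n.choose k = (n + 1).choose (k + 1) * (k + 1) :=
    Nat.add_one_mul_choose_eq n k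
  have hdvd : q ^ m ∣ (n + 1).choose (k + 1) * (k + 1) := hid ▸ hN.mul_right _
  have hne : (n + 1).choose (k + 1) * (k + 1) ≠ 0 := by positivity
  have hm : m ≤ ((n + 1).choose (k + 1) * (k + 1)).factorization q :=
    (Nat.Prime.pow_dvd_iff_le_factorization hq hne).mp hdvd
  rw [Nat.factorization_mul (by omega) (by omega)] at hm
  have hk : (k + 1).factorization q < m := by
    by_contra h
    push_neg at h
    have : q ^ m ∣ k + 1 := (Nat.Prime.pow_dvd_iff_le_factorization hq (by omega)).mpr h
    have := Nat.le_of_dvd (by omega) this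
    omega
  have h1 : 1 ≤ ((n + 1).choose (k + 1)).factorization q := by
    simp only [Finsupp.add_apply] at hm
    omega
  have := (Nat.Prime.pow_dvd_iff_le_factorization hq (by omega : (n+1).choose (k+1) ≠ 0)).mpr h1
  simpa using this

lemma upperA_pow_entry (n : ℕ) (a : ℤ) (k : ℕ) (i j : Fin n) :
    ((upperA ℤ n a) ^ k) i j =
      if (i : ℕ) ≤ (j : ℕ) then (k.choose ((j : ℕ) - (i : ℕ))) * a ^ ((j : ℕ) - (i : ℕ))
      else 0 := by
  induction k generalizing i j with
  | zero =>
    simp only [pow_zero, Matrix.one_apply]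
    rcases lt_trichotomy (i : ℕ) (j : ℕ) with h | h | h
    · rw [if_neg (by intro hh; rw [hh] at h; omega), if_pos (le_of_lt h),
        Nat.choose_eq_zero_of_lt (by omega)]
      simp
    · rw [if_pos (Fin.ext h), if_pos (le_of_eq h)]
      simp [h]
    · rw [if_neg (by intro hh; rw [hh] at h; omega), if_neg (by omega)]
  | succ k ih =>
    rw [pow_succ, Matrix.mul_apply]
    have hsplit : ∀ l : Fin n, ((upperA ℤ n a) ^ k) i l * (upperA ℤ n a) l j =
        (if l = j then ((upperA ℤ n a) ^ k) i j else 0) +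
        (if (l : ℕ) + 1 = (j : ℕ) then a * ((upperA ℤ n a) ^ k) i l else 0) := by
      intro l
      simp only [upperA, Matrix.of_apply]
      rcases eq_or_ne (l : ℕ) (j : ℕ) with h | h
      · have : l = j := Fin.ext h
        subst this
        rw [if_pos rfl, if_pos rfl, if_neg (by omega)]
        ring
      · rw [if_neg h, if_neg (fun hh => h (Fin.val_eq_of_eq hh))]
        rcases eq_or_ne ((l : ℕ) + 1) (j : ℕ) with h2 | h2
        · rw [if_pos h2.symm, if_pos h2]; ring
        · rw [if_neg (fun hh => h2 hh.symm), if_neg h2]; ring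
    rw [Finset.sum_congr rfl fun l _ => hsplit l, Finset.sum_add_distrib,
      Finset.sum_ite_eq' Finset.univ j]
    simp only [Finset.mem_univ, if_pos]
    rcases Nat.eq_zero_or_pos (j : ℕ) with hj0 | hj0
    · have hsum : (∑ l : Fin n, if (l : ℕ) + 1 = (j : ℕ) then a * ((upperA ℤ n a) ^ k) i l else 0)
          = 0 := Finset.sum_eq_zero fun l _ => if_neg (by omega)
      rw [hsum, ih, add_zero]
      have hij : ((i : ℕ) ≤ (j : ℕ)) ↔ (i : ℕ) = 0 := by omega
      by_cases h : (i : ℕ) ≤ (j : ℕ)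
      · rw [if_pos h, if_pos h]
        have : (j : ℕ) - (i : ℕ) = 0 := by omega
        simp [this]
      · rw [if_neg h, if_neg h]
    · have hjn : (j : ℕ) - 1 < n := by omega
      set j' : Fin n := ⟨(j : ℕ) - 1, hjn⟩ with hj'
      have hsum : (∑ l : Fin n, if (l : ℕ) + 1 = (j : ℕ) then a * ((upperA ℤ n a) ^ k) i l else 0)
          = a * ((upperA ℤ n a) ^ k) i j' := by
        rw [Finset.sum_eq_single j']
        · rw [if_pos (by simp [hj']; omega)]
        · intro l _ hl
          exact if_neg (fun hh => hl (Fin.ext (by simp [hj']; omega)))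
        · intro h; exact absurd (Finset.mem_univ j') h
      rw [hsum, ih, ih]
      have hj'v : (j' : ℕ) = (j : ℕ) - 1 := rfl
      rcases lt_trichotomy (i : ℕ) (j : ℕ) with h | h | h
      · rw [if_pos (le_of_lt h), if_pos (by omega), if_pos (by omega)]
        obtain ⟨e, he⟩ : ∃ e, (j : ℕ) - (i : ℕ) = e + 1 := ⟨(j : ℕ) - (i : ℕ) - 1, by omega⟩
        rw [he, hj'v]
        have : (j : ℕ) - 1 - (i : ℕ) = e := by omega
        rw [this, Nat.choose_succ_succ]
        push_cast
        ring
      · rw [if_pos (le_of_eq h), if_pos (le_of_eq h), if_neg (by omega)]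
        have : (j : ℕ) - (i : ℕ) = 0 := by omega
        simp [this]
      · rw [if_neg (by omega), if_neg (by omega), if_neg (by omega)]
        ring

/-- for `n ≥ 2`, a prime `q`, an integer `a ≡ 1 (mod q)` and `t` with
`n - 1 < q^{t+1}`, for every `r ≥ 1` the reduction modulo `q` of `A^(r·q^{t+1} + 1)` is the
matrix over `ZMod q` with `1`'s on the diagonal and on the superdiagonal and `0`
elsewhere. -/
theorem sln_power_reduction (n q : ℕ) (hn : 2 ≤ n) (hq : q.Prime)
    (a : ℤ) (ha : a ≡ 1 [ZMOD (q : ℤ)]) (t : ℕ) (ht : n - 1 < q ^ (t + 1)) :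
    ∀ r : ℕ, 1 ≤ r →
      modpn n q ((Agen n a) ^ (r * q ^ (t + 1) + 1)) =
        ⟨upperA (ZMod q) n 1, upperA_det (ZMod q) n 1⟩ := by
  intro r hr
  haveI : NeZero q := ⟨hq.pos.ne'⟩
  set Q : ℕ := q ^ (t + 1) with hQ
  set K : ℕ := r * Q + 1 with hK
  have hQpos : 0 < Q := pow_pos hq.pos _
  have hQK : Q ≤ r * Q := Nat.le_mul_of_pos_left Q hr
  apply Matrix.SpecialLinearGroup.ext
  intro i j
  have hent : (modpn n q ((Agen n a) ^ K) : Matrix (Fin n) (Fin n) (ZMod q)) i j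
      = ((((Agen n a) ^ K : Matrix.SpecialLinearGroup (Fin n) ℤ) : Matrix (Fin n) (Fin n) ℤ) i j : ZMod q) := rfl
  have hcoe : (((Agen n a) ^ K : Matrix.SpecialLinearGroup (Fin n) ℤ) : Matrix (Fin n) (Fin n) ℤ)
      = (upperA ℤ n a) ^ K := by
    rw [Matrix.SpecialLinearGroup.coe_pow]; rfl
  rw [hent, hcoe, upperA_pow_entry]
  have haz : ((a : ℤ) : ZMod q) = 1 := by
    have := (ZMod.intCast_eq_intCast_iff a 1 q).mpr ha
    simpa using this
  have hQz : ((Q : ℕ) : ZMod q) = 0 := by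
    rw [hQ]
    push_cast
    simp [ZMod.natCast_self]
  show _ = upperA (ZMod q) n 1 i j
  simp only [upperA, Matrix.of_apply]
  rcases lt_trichotomy (i : ℕ) (j : ℕ) with h | h | h
  · rw [if_pos (le_of_lt h), if_neg (by omega)]
    set d : ℕ := (j : ℕ) - (i : ℕ) with hd
    have hd1 : 1 ≤ d := by omega
    rcases eq_or_lt_of_le hd1 with hd1' | hd2
    · rw [if_pos (by omega)]
      rw [← hd1', Nat.choose_one_right]
      rw [hK]
      push_cast
      rw [hQz, haz]
      ring
    · rw [if_neg (by omega)]
      have hdn : d < Q := by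
        have : (j : ℕ) < n := j.isLt
        omega
      obtain ⟨e, he⟩ : ∃ e, d = e + 1 := ⟨d - 1, by omega⟩
      have hdvd : q ∣ K.choose d := by
        rw [hK, he, Nat.choose_succ_succ]
        refine dvd_add ?_ ?_
        · exact key_dvd q hq (t + 1) (r * Q) e (hQ ▸ dvd_mul_left Q r) (by omega)
            (by omega) (by omega)
        · exact key_dvd q hq (t + 1) (r * Q) (e + 1) (hQ ▸ dvd_mul_left Q r) (by omega)
            (by omega) (by omega)
      have : ((K.choose d : ℕ) : ZMod q) = 0 :=
        (ZMod.natCast_eq_zero_iff _ _).mpr hdvd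
      push_cast
      rw [this]
      ring
  · rw [if_pos (le_of_eq h), if_pos h]
    have : (j : ℕ) - (i : ℕ) = 0 := by omega
    simp [this]
  · rw [if_neg (by omega), if_neg (by omega), if_neg (by omega)]
    simp
end

section
/- Let n ≥ 2, and let X, Y ∈ SL_n(ℤ) be matrices that generate a free subgroup of rank 2 (i.e., the homomorphism from the free group on two generators sending the generators to X and Y is injective). Let γ ≥ 1 be a real number bounding the L∞-operator norms of X, X⁻¹, Y, and Y⁻¹ (the L∞-operator norm of a matrix M is the maximum over rows i of Σ_j |M_{ij}|). Then for every prime p and every non-identity element w of the free group on two generators whose reduced word length m satisfies γ^m < p/2, the image of w under the homomorphism to SL_n(ZMod p) sending the two generators to the mod-p reductions X_p and Y_p is not the identity. -/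

lemma rowsum_prod {n : ℕ} (γ : ℝ) (hγ : 1 ≤ γ)
    (L : List (Matrix.SpecialLinearGroup (Fin n) ℤ))
    (hL : ∀ M ∈ L, ∀ i : Fin n, (∑ j : Fin n, (|M.val i j| : ℝ)) ≤ γ) :
    ∀ i : Fin n, (∑ j : Fin n, (|(L.prod).val i j| : ℝ)) ≤ γ ^ L.length := by
  induction L with
  | nil =>
    intro i
    simp [Matrix.one_apply, apply_ite]
  | cons M L ih =>
    intro i
    have hP : ∀ k : Fin n, (∑ j : Fin n, (|(L.prod).val k j| : ℝ)) ≤ γ ^ L.length :=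
      ih (fun M hM => hL M (List.mem_cons_of_mem _ hM))
    have hpow : (0:ℝ) ≤ γ ^ L.length := le_trans zero_le_one (one_le_pow₀ hγ)
    have hM : (∑ k : Fin n, (|M.val i k| : ℝ)) ≤ γ := hL M List.mem_cons_self i
    have key : (∑ j : Fin n, (|((M :: L).prod).val i j| : ℝ))
        ≤ ∑ k : Fin n, (|M.val i k| : ℝ) * γ ^ L.length := by
      calc (∑ j : Fin n, (|((M :: L).prod).val i j| : ℝ))
          ≤ ∑ j : Fin n, ∑ k : Fin n, (|M.val i k| : ℝ) * |(L.prod).val k j| := by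
            apply Finset.sum_le_sum
            intro j _
            rw [List.prod_cons, Matrix.SpecialLinearGroup.coe_mul, Matrix.mul_apply]
            push_cast
            calc |∑ k : Fin n, (M.val i k : ℝ) * (L.prod).val k j|
                ≤ ∑ k : Fin n, |(M.val i k : ℝ) * (L.prod).val k j| :=
                  Finset.abs_sum_le_sum_abs _ _
              _ = ∑ k : Fin n, |(M.val i k : ℝ)| * |((L.prod).val k j : ℝ)| := by
                  simp [abs_mul]
        _ = ∑ k : Fin n, (|M.val i k| : ℝ) * (∑ j : Fin n, (|(L.prod).val k j| : ℝ)) := by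
            rw [Finset.sum_comm]
            simp [Finset.mul_sum]
        _ ≤ ∑ k : Fin n, (|M.val i k| : ℝ) * γ ^ L.length := by
            apply Finset.sum_le_sum
            intro k _
            exact mul_le_mul_of_nonneg_left (hP k) (abs_nonneg _)
    calc (∑ j : Fin n, (|((M :: L).prod).val i j| : ℝ))
        ≤ ∑ k : Fin n, (|M.val i k| : ℝ) * γ ^ L.length := key
      _ = (∑ k : Fin n, (|M.val i k| : ℝ)) * γ ^ L.length := by rw [Finset.sum_mul]
      _ ≤ γ * γ ^ L.length := mul_le_mul_of_nonneg_right hM hpow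
      _ = γ ^ (M :: L).length := by rw [List.length_cons, pow_succ']

/-- let `X, Y ∈ SL_n(ℤ)` generate a free subgroup of rank 2 and let `γ ≥ 1`
bound the `L∞`-operator norms (maximum over rows of the sum of absolute values of the
entries) of `X, X⁻¹, Y, Y⁻¹`. Then for every prime `p` and every nontrivial element `w` of
the free group on two generators whose reduced word length `m` satisfies `γ^m < p/2`, the
image of `w` under the homomorphism sending the generators to the mod-`p` reductions of `X`
and `Y` is nontrivial. -/
theorem sln_girth_from_norm (n : ℕ) (hn : 2 ≤ n)
    (X Y : Matrix.SpecialLinearGroup (Fin n) ℤ)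
    (hfree : Function.Injective ⇑(FreeGroup.lift ![X, Y]))
    (γ : ℝ) (hγ : 1 ≤ γ)
    (hnorm : ∀ M ∈ ({X, X⁻¹, Y, Y⁻¹} : Set (Matrix.SpecialLinearGroup (Fin n) ℤ)),
      ∀ i : Fin n, (∑ j : Fin n, (|M.val i j| : ℝ)) ≤ γ) :
    ∀ p : ℕ, p.Prime → ∀ w : FreeGroup (Fin 2), w ≠ 1 →
      γ ^ (FreeGroup.toWord w).length < (p : ℝ) / 2 →
      FreeGroup.lift ![modpn n p X, modpn n p Y] w ≠ 1 := by
  intro p hp w hw hlen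
  set m := (FreeGroup.toWord w).length with hm
  set W : Matrix.SpecialLinearGroup (Fin n) ℤ := FreeGroup.lift ![X, Y] w with hWdef
  have hW1 : W ≠ 1 := by
    intro h
    exact hw (hfree (by simpa using h))
  -- entry bound on W
  have hprod : W = ((FreeGroup.toWord w).map
      (fun x => cond x.2 (![X, Y] x.1) (![X, Y] x.1)⁻¹)).prod := by
    rw [hWdef]
    conv_lhs => rw [← FreeGroup.mk_toWord (x := w)]
    exact FreeGroup.lift_mk
  have hmem : ∀ M ∈ (FreeGroup.toWord w).map
      (fun x => cond x.2 (![X, Y] x.1) (![X, Y] x.1)⁻¹),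
      ∀ i : Fin n, (∑ j : Fin n, (|M.val i j| : ℝ)) ≤ γ := by
    intro M hM
    rw [List.mem_map] at hM
    obtain ⟨⟨a, b⟩, _, rfl⟩ := hM
    apply hnorm
    fin_cases a <;> cases b <;> simp [Set.mem_insert_iff]
  have hrow : ∀ i : Fin n, (∑ j : Fin n, (|W.val i j| : ℝ)) ≤ γ ^ m := by
    intro i
    rw [hprod]
    have := rowsum_prod γ hγ _ hmem i
    simpa [hm] using this
  have hentry : ∀ i j : Fin n, (|W.val i j| : ℝ) ≤ γ ^ m := by
    intro i j
    refine le_trans ?_ (hrow i)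
    exact Finset.single_le_sum (fun k _ => abs_nonneg ((W.val i k : ℝ))) (Finset.mem_univ j)
  have hγm1 : (1:ℝ) ≤ γ ^ m := one_le_pow₀ hγ
  -- suppose image is 1
  intro hcontra
  have hlift : FreeGroup.lift ![modpn n p X, modpn n p Y] w = modpn n p W := by
    rw [hWdef]
    have : FreeGroup.lift ![modpn n p X, modpn n p Y]
        = (modpn n p).comp (FreeGroup.lift ![X, Y]) := by
      apply FreeGroup.ext_hom
      intro a
      fin_cases a <;> simp
    rw [this]
    rfl
  rw [hlift] at hcontra
  -- entries agree mod p
  have hentries : ∀ i j : Fin n, ((W.val i j : ℤ) : ZMod p)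
      = (((1 : Matrix.SpecialLinearGroup (Fin n) ℤ).val i j : ℤ) : ZMod p) := by
    intro i j
    have := congrArg (fun M => M.val i j) hcontra
    simpa [modpn, Matrix.SpecialLinearGroup.coe_one, Matrix.one_apply, apply_ite] using this
  -- find differing entry
  have : W = 1 := by
    apply Subtype.ext
    ext i j
    have hd := hentries i j
    rw [← sub_eq_zero, ← Int.cast_sub, ZMod.intCast_zmod_eq_zero_iff_dvd] at hd
    have habs : (|W.val i j - (1 : Matrix.SpecialLinearGroup (Fin n) ℤ).val i j| : ℝ) < p := by
      have h1 : (|(1 : Matrix.SpecialLinearGroup (Fin n) ℤ).val i j| : ℝ) ≤ 1 := by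
        simp [Matrix.SpecialLinearGroup.coe_one, Matrix.one_apply, apply_ite]
        split <;> norm_num
      calc (|W.val i j - (1 : Matrix.SpecialLinearGroup (Fin n) ℤ).val i j| : ℝ)
          ≤ |(W.val i j : ℝ)| + |((1 : Matrix.SpecialLinearGroup (Fin n) ℤ).val i j : ℝ)| := by
            push_cast
            exact abs_sub _ _
        _ ≤ γ ^ m + 1 := add_le_add (hentry i j) h1
        _ ≤ γ ^ m + γ ^ m := by linarith
        _ = 2 * γ ^ m := by ring
        _ < 2 * ((p : ℝ) / 2) := by linarith
        _ = p := by ring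
    by_contra hne
    have hne' : W.val i j - (1 : Matrix.SpecialLinearGroup (Fin n) ℤ).val i j ≠ 0 :=
      sub_ne_zero_of_ne hne
    have hple : (p : ℤ) ≤ |W.val i j - (1 : Matrix.SpecialLinearGroup (Fin n) ℤ).val i j| :=
      Int.le_of_dvd (abs_pos.mpr hne') ((dvd_abs _ _).mpr hd)
    have : (p : ℝ) ≤ |(W.val i j - (1 : Matrix.SpecialLinearGroup (Fin n) ℤ).val i j : ℝ)| := by
      push_cast at hple ⊢
      exact_mod_cast hple
    push_cast at habs
    linarith
  exact hW1 this
end
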